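/- arXiv:0809.0245 — 7 statements merged into one kernel-verified Lean document; each statement's English description precedes it below -/
import Mathlib

section
/- In the root system of type A_n, for each s ≥ 1 the abelian antichains with s elements are exactly the sets {α_{i_k, j_k} : 1 ≤ k ≤ s} with i_1 < i_2 < ... < i_s ≤ j_1 < j_2 < ... < j_s, where α_{i,j} = α_i + ... + α_j. In particular, the number of abelian antichains with s elements is C(n, 2s) + C(n, 2s-1). -/
noncomputable section

/-- Standard basis vector `ε_i` of `ℝ^{n+1}`. -/
def eps (n : ℕ) (i : Fin (n + 1)) : EuclideanSpace ℝ (Fin (n + 1)) :=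
  EuclideanSpace.single i 1

/-- The root system of type `A_n`: the vectors `ε_i - ε_j`, `i ≠ j`. -/
def typeA (n : ℕ) : Set (EuclideanSpace ℝ (Fin (n + 1))) :=
  {v | ∃ i j : Fin (n + 1), i ≠ j ∧ v = eps n i - eps n j}

/-- The positive roots of type `A_n`. -/
def posA (n : ℕ) : Set (EuclideanSpace ℝ (Fin (n + 1))) :=
  {v | ∃ i j : Fin (n + 1), i < j ∧ v = eps n i - eps n j}

/-- The simple roots `α_i = ε_i - ε_{i+1}` of type `A_n`. -/
def simpleA (n : ℕ) (i : Fin n) : EuclideanSpace ℝ (Fin (n + 1)) :=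
  eps n i.castSucc - eps n i.succ

/-- The positive root `α_{i,j} = α_i + ⋯ + α_j = ε_i - ε_{j+1}`. -/
def alphaA (n : ℕ) (i j : Fin n) : EuclideanSpace ℝ (Fin (n + 1)) :=
  eps n i.castSucc - eps n j.succ

/-- `Q⁺` for type `A_n`. -/
def QplusA (n : ℕ) : AddSubmonoid (EuclideanSpace ℝ (Fin (n + 1))) :=
  AddSubmonoid.closure (Set.range (simpleA n))

/-- The dominance order for type `A_n`. -/
def leA (n : ℕ) (α β : EuclideanSpace ℝ (Fin (n + 1))) : Prop :=
  β - α ∈ QplusA n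

/-- An antichain in the positive roots of type `A_n`. -/
def IsAntichainA (n : ℕ) (A : Set (EuclideanSpace ℝ (Fin (n + 1)))) : Prop :=
  A ⊆ posA n ∧ ∀ α ∈ A, ∀ β ∈ A, α ≠ β → ¬ leA n α β

/-- The ideal `Φ(A)` generated by `A`, for type `A_n`. -/
def PhiOfA (n : ℕ) (A : Set (EuclideanSpace ℝ (Fin (n + 1)))) :
    Set (EuclideanSpace ℝ (Fin (n + 1))) :=
  {α ∈ posA n | ∃ β ∈ A, leA n β α}

/-- An abelian antichain in type `A_n`: an antichain whose generated ideal `Φ(A)`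
contains no two (not necessarily distinct) elements summing to a root. -/
def IsAbelianAntichainA (n : ℕ) (A : Set (EuclideanSpace ℝ (Fin (n + 1)))) : Prop :=
  IsAntichainA n A ∧ ∀ α ∈ PhiOfA n A, ∀ β ∈ PhiOfA n A, α + β ∉ typeA n

end

namespace Stmt8aux

lemma eps_apply {n : ℕ} (i b : Fin (n+1)) : eps n i b = if b = i then 1 else 0 :=
  EuclideanSpace.single_apply i 1 b

noncomputable def Pm (n : ℕ) (a : ℕ) (v : EuclideanSpace ℝ (Fin (n+1))) : ℝ :=
  ∑ b : Fin (n+1), if (b : ℕ) ≤ a then v b else 0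

lemma Pm_add {n : ℕ} (a : ℕ) (v w : EuclideanSpace ℝ (Fin (n+1))) :
    Pm n a (v + w) = Pm n a v + Pm n a w := by
  unfold Pm
  rw [← Finset.sum_add_distrib]
  refine Finset.sum_congr rfl fun b _ => ?_
  split_ifs <;> simp [PiLp.add_apply]

lemma Pm_sub {n : ℕ} (a : ℕ) (v w : EuclideanSpace ℝ (Fin (n+1))) :
    Pm n a (v - w) = Pm n a v - Pm n a w := by
  unfold Pm
  rw [← Finset.sum_sub_distrib]
  refine Finset.sum_congr rfl fun b _ => ?_
  split_ifs <;> simp [PiLp.sub_apply]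

lemma Pm_eps {n : ℕ} (a : ℕ) (i : Fin (n+1)) :
    Pm n a (eps n i) = if (i : ℕ) ≤ a then 1 else 0 := by
  unfold Pm
  have h : ∀ b : Fin (n+1), (if (b:ℕ) ≤ a then eps n i b else 0) =
      (if b = i then (if (i:ℕ) ≤ a then (1:ℝ) else 0) else 0) := by
    intro b
    rw [eps_apply]
    by_cases hb : b = i
    · subst hb; simp
    · simp [hb]
  rw [Finset.sum_congr rfl fun b _ => h b, Finset.sum_ite_eq']
  simp

lemma Pm_nonneg {n : ℕ} {v : EuclideanSpace ℝ (Fin (n+1))} (hv : v ∈ QplusA n) (a : ℕ) :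
    0 ≤ Pm n a v := by
  induction hv using AddSubmonoid.closure_induction with
  | mem x hx =>
      obtain ⟨i, rfl⟩ := hx
      unfold simpleA
      rw [Pm_sub, Pm_eps, Pm_eps]
      have h1 : ((i.castSucc : Fin (n+1)) : ℕ) = (i : ℕ) := rfl
      have h2 : ((i.succ : Fin (n+1)) : ℕ) = (i : ℕ) + 1 := rfl
      rw [h1, h2]
      split_ifs <;> [norm_num; norm_num; omega; norm_num]
  | zero =>
      have h0 : Pm n a (0 : EuclideanSpace ℝ (Fin (n+1))) = 0 := by
        unfold Pm; refine Finset.sum_eq_zero fun b _ => ?_; split_ifs <;> simp [PiLp.zero_apply]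
      rw [h0]
  | add x y hx hy ihx ihy => rw [Pm_add]; linarith

lemma eps_sub_mem_aux {n : ℕ} (m : ℕ) : ∀ a b : Fin (n+1), (b:ℕ) = (a:ℕ) + m →
    eps n a - eps n b ∈ QplusA n := by
  induction m with
  | zero =>
      intro a b h
      have : a = b := Fin.ext (by omega)
      subst this
      simp only [sub_self]
      exact zero_mem _
  | succ m ih =>
      intro a b h
      have hb : (b:ℕ) < n + 1 := b.isLt
      have hn : (a:ℕ) + m < n := by omega
      set c : Fin (n+1) := ⟨(a:ℕ) + m, by omega⟩ with hc
      have h1 : eps n a - eps n c ∈ QplusA n := ih a c rfl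
      have h2 : eps n c - eps n b = simpleA n ⟨(a:ℕ) + m, hn⟩ := by
        have e1 : (Fin.castSucc ⟨(a:ℕ)+m, hn⟩) = c := by
          apply Fin.ext; simp [hc]
        have e2 : (Fin.succ ⟨(a:ℕ)+m, hn⟩) = b := by
          apply Fin.ext; simp [Fin.val_succ]; omega
        unfold simpleA
        rw [e1, e2]
      have h3 : eps n c - eps n b ∈ QplusA n := by
        rw [h2]; exact AddSubmonoid.subset_closure ⟨_, rfl⟩
      have h4 : eps n a - eps n b = (eps n a - eps n c) + (eps n c - eps n b) := by abel
      rw [h4]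
      exact add_mem h1 h3

lemma eps_sub_mem {n : ℕ} {a b : Fin (n+1)} (h : a ≤ b) : eps n a - eps n b ∈ QplusA n :=
  eps_sub_mem_aux ((b:ℕ) - (a:ℕ)) a b (by have := Fin.le_def.mp h; omega)

lemma leA_alphaA_iff {n : ℕ} {i j k l : Fin n} (hij : i ≤ j) (hkl : k ≤ l) :
    leA n (alphaA n i j) (alphaA n k l) ↔ (k ≤ i ∧ j ≤ l) := by
  have hij' : (i:ℕ) ≤ (j:ℕ) := hij
  have hkl' : (k:ℕ) ≤ (l:ℕ) := hkl
  constructor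
  · intro h
    unfold leA at h
    have hP : ∀ a : ℕ, (0:ℝ) ≤ (if (k:ℕ) ≤ a then 1 else 0) - (if (l:ℕ)+1 ≤ a then 1 else 0)
        - ((if (i:ℕ) ≤ a then 1 else 0) - (if (j:ℕ)+1 ≤ a then (1:ℝ) else 0)) := by
      intro a
      have := Pm_nonneg h a
      unfold alphaA at this
      rw [Pm_sub, Pm_sub, Pm_sub, Pm_eps, Pm_eps, Pm_eps, Pm_eps] at this
      simpa using this
    constructor
    · by_contra hki
      have hik : (i:ℕ) < (k:ℕ) := by
        have := Fin.le_def.not.mp hki; omega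
      have := hP (i:ℕ)
      split_ifs at this <;> first | linarith | omega
    · by_contra hjl
      have hlj : (l:ℕ) < (j:ℕ) := by
        have := Fin.le_def.not.mp hjl; omega
      have := hP (max (i:ℕ) ((l:ℕ)+1))
      have hm1 : (i:ℕ) ≤ max (i:ℕ) ((l:ℕ)+1) := le_max_left _ _
      have hm2 : (l:ℕ)+1 ≤ max (i:ℕ) ((l:ℕ)+1) := le_max_right _ _
      have hm3 : ¬ ((j:ℕ)+1 ≤ max (i:ℕ) ((l:ℕ)+1)) := by omega
      split_ifs at this <;> first | linarith | omega
  · rintro ⟨hki, hjl⟩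
    unfold leA alphaA
    have h1 : eps n k.castSucc - eps n i.castSucc ∈ QplusA n :=
      eps_sub_mem (by rw [Fin.le_def]; simp only [Fin.coe_castSucc]; exact hki)
    have h2 : eps n j.succ - eps n l.succ ∈ QplusA n :=
      eps_sub_mem (by rw [Fin.le_def]; simp only [Fin.val_succ]; omega)
    have h3 : eps n k.castSucc - eps n l.succ - (eps n i.castSucc - eps n j.succ)
        = (eps n k.castSucc - eps n i.castSucc) + (eps n j.succ - eps n l.succ) := by abel
    rw [h3]
    exact add_mem h1 h2

lemma mem_posA_iff {n : ℕ} {v : EuclideanSpace ℝ (Fin (n+1))} :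
    v ∈ posA n ↔ ∃ i j : Fin n, i ≤ j ∧ v = alphaA n i j := by
  constructor
  · rintro ⟨p, q, hpq, rfl⟩
    have hpq' : (p:ℕ) < (q:ℕ) := hpq
    have hq : (q:ℕ) < n + 1 := q.isLt
    refine ⟨⟨(p:ℕ), by omega⟩, ⟨(q:ℕ) - 1, by omega⟩, by rw [Fin.le_def]; simp; omega, ?_⟩
    unfold alphaA
    have e1 : (Fin.castSucc (⟨(p:ℕ), by omega⟩ : Fin n)) = p := by apply Fin.ext; simp
    have e2 : (Fin.succ (⟨(q:ℕ) - 1, by omega⟩ : Fin n)) = q := by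
      apply Fin.ext; simp [Fin.val_succ]; omega
    rw [e1, e2]
  · rintro ⟨i, j, hij, rfl⟩
    have hij' : (i:ℕ) ≤ (j:ℕ) := hij
    exact ⟨i.castSucc, j.succ, by rw [Fin.lt_def]; simp; omega, rfl⟩

lemma alphaA_apply {n : ℕ} (i j : Fin n) (b : Fin (n+1)) :
    alphaA n i j b = (if b = i.castSucc then 1 else 0) - (if b = j.succ then 1 else 0) := by
  unfold alphaA
  rw [PiLp.sub_apply, eps_apply, eps_apply]

lemma castSucc_ne_succ {n : ℕ} {i j : Fin n} (hij : i ≤ j) : i.castSucc ≠ j.succ := by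
  have : (i:ℕ) ≤ (j:ℕ) := hij
  intro h
  have := congrArg Fin.val h
  simp [Fin.val_succ] at this
  omega

lemma alphaA_inj {n : ℕ} {i j k l : Fin n} (hij : i ≤ j) (hkl : k ≤ l)
    (h : alphaA n i j = alphaA n k l) : i = k ∧ j = l := by
  have happ : ∀ b, alphaA n i j b = alphaA n k l b := fun b => by rw [h]
  have hik : i = k := by
    by_contra hik
    have hik' : i.castSucc ≠ k.castSucc := fun hh => hik (Fin.castSucc_injective n hh)
    have h1 := happ i.castSucc
    rw [alphaA_apply, alphaA_apply, if_pos rfl, if_neg (castSucc_ne_succ hij),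
      if_neg hik'] at h1
    split_ifs at h1 <;> linarith
  subst hik
  refine ⟨rfl, ?_⟩
  by_contra hjl
  have hjl' : j.succ ≠ l.succ := fun hh => hjl (Fin.succ_injective n hh)
  have h1 := happ j.succ
  rw [alphaA_apply, alphaA_apply, if_pos rfl, if_neg (Ne.symm (castSucc_ne_succ hij))] at h1
  split_ifs at h1 with hq
  · exact hjl' hq
  · linarith

lemma sum_alphaA_root {n : ℕ} {i j k l : Fin n} (hij : i ≤ j) (hkl : k ≤ l)
    (h : alphaA n i j + alphaA n k l ∈ typeA n) : (j:ℕ) + 1 = (k:ℕ) ∨ (l:ℕ) + 1 = (i:ℕ) := by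
  by_contra hc
  push_neg at hc
  obtain ⟨hc1, hc2⟩ := hc
  obtain ⟨p, q, hpq, heq⟩ := h
  have happ : ∀ b : Fin (n+1),
      ((if b = i.castSucc then (1:ℝ) else 0) - (if b = j.succ then 1 else 0)) +
      ((if b = k.castSucc then 1 else 0) - (if b = l.succ then 1 else 0)) =
      (if b = p then 1 else 0) - (if b = q then 1 else 0) := by
    intro b
    have : (alphaA n i j + alphaA n k l) b = (eps n p - eps n q) b := by rw [heq]
    rw [PiLp.add_apply, alphaA_apply, alphaA_apply, PiLp.sub_apply, eps_apply, eps_apply] at this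
    exact this
  have hBC : j.succ ≠ k.castSucc := by
    intro hh; exact hc1 (by have := congrArg Fin.val hh; simpa [Fin.val_succ] using this)
  have hAD : i.castSucc ≠ l.succ := by
    intro hh
    apply hc2
    have := congrArg Fin.val hh; simp [Fin.val_succ] at this; omega
  by_cases hAC : i.castSucc = k.castSucc
  · have h1 := happ i.castSucc
    rw [if_pos rfl, if_neg (castSucc_ne_succ hij), if_pos hAC, if_neg hAD] at h1
    split_ifs at h1 <;> linarith
  · have h1 := happ i.castSucc
    rw [if_pos rfl, if_neg (castSucc_ne_succ hij), if_neg hAC, if_neg hAD] at h1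
    have h2 := happ k.castSucc
    rw [if_pos rfl, if_neg (castSucc_ne_succ hkl), if_neg (fun hh => hAC hh.symm),
      if_neg (Ne.symm hBC)] at h2
    have hp1 : i.castSucc = p := by split_ifs at h1 <;> first | assumption | linarith
    have hp2 : k.castSucc = p := by split_ifs at h2 <;> first | assumption | linarith
    exact hAC (hp1.trans hp2.symm)

lemma sum_alphaA_mem_typeA {n : ℕ} {i j k l : Fin n} (hij : i ≤ j) (hjk : (j:ℕ) + 1 = (k:ℕ))
    (hkl : k ≤ l) : alphaA n i j + alphaA n k l ∈ typeA n := by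
  have hij' : (i:ℕ) ≤ (j:ℕ) := hij
  have hkl' : (k:ℕ) ≤ (l:ℕ) := hkl
  refine ⟨i.castSucc, l.succ, ?_, ?_⟩
  · intro hh
    have := congrArg Fin.val hh; simp [Fin.val_succ] at this; omega
  · have e : j.succ = k.castSucc := by apply Fin.ext; simp [Fin.val_succ]; omega
    unfold alphaA
    rw [e]
    abel

lemma leA_refl {n : ℕ} (α : EuclideanSpace ℝ (Fin (n+1))) : leA n α α := by
  unfold leA; rw [sub_self]; exact zero_mem _

lemma backward {n s : ℕ} (ii jj : Fin s → Fin n) (h1 : StrictMono ii) (h2 : StrictMono jj)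
    (hc : ∀ k l, ii k ≤ jj l) :
    IsAbelianAntichainA n (Set.range fun k => alphaA n (ii k) (jj k)) ∧
    (Set.range fun k => alphaA n (ii k) (jj k)).ncard = s := by
  have hroot : ∀ k, ii k ≤ jj k := fun k => hc k k
  have hsub : (Set.range fun k => alphaA n (ii k) (jj k)) ⊆ posA n := by
    rintro v ⟨k, rfl⟩; exact mem_posA_iff.mpr ⟨ii k, jj k, hroot k, rfl⟩
  have hinj : Function.Injective (fun k => alphaA n (ii k) (jj k)) := by
    intro k k' h
    exact h1.injective (alphaA_inj (hroot k) (hroot k') h).1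
  refine ⟨⟨⟨hsub, ?_⟩, ?_⟩, ?_⟩
  · rintro α ⟨k, rfl⟩ β ⟨k', rfl⟩ hne hle
    rw [leA_alphaA_iff (hroot k) (hroot k')] at hle
    have hk1 : k' ≤ k := h1.le_iff_le.mp hle.1
    have hk2 : k ≤ k' := h2.le_iff_le.mp hle.2
    exact hne (by rw [le_antisymm hk2 hk1])
  · rintro α ⟨hαpos, β0, ⟨k, rfl⟩, hβ0⟩ β ⟨hβpos, γ0, ⟨k', rfl⟩, hγ0⟩ hsum
    obtain ⟨a, b, hab, rfl⟩ := mem_posA_iff.mp hαpos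
    obtain ⟨c, d, hcd, rfl⟩ := mem_posA_iff.mp hβpos
    rw [leA_alphaA_iff (hroot k) hab] at hβ0
    rw [leA_alphaA_iff (hroot k') hcd] at hγ0
    have h1' : (c:ℕ) ≤ (ii k' : ℕ) := hγ0.1
    have h2' : ((jj k : ℕ)) ≤ (b:ℕ) := hβ0.2
    have h3' : (ii k' : ℕ) ≤ (jj k : ℕ) := hc k' k
    have h4' : (a:ℕ) ≤ (ii k : ℕ) := hβ0.1
    have h5' : ((jj k' : ℕ)) ≤ (d:ℕ) := hγ0.2
    have h6' : (ii k : ℕ) ≤ (jj k' : ℕ) := hc k k'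
    rcases sum_alphaA_root hab hcd hsum with h | h <;> omega
  · rw [← Nat.card_coe_set_eq, Nat.card_range_of_injective hinj,
      Nat.card_eq_fintype_card, Fintype.card_fin]

lemma forward {n s : ℕ} {A : Set (EuclideanSpace ℝ (Fin (n+1)))}
    (hA : IsAbelianAntichainA n A) (hcard : A.ncard = s) :
    ∃ ii jj : Fin s → Fin n, StrictMono ii ∧ StrictMono jj ∧
      (∀ k l, ii k ≤ jj l) ∧ A = Set.range fun k => alphaA n (ii k) (jj k) := by
  obtain ⟨⟨hsub, hanti⟩, habel⟩ := hA
  classical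
  set P : Finset (Fin n × Fin n) :=
    Set.Finite.toFinset (Set.toFinite {p : Fin n × Fin n | p.1 ≤ p.2 ∧ alphaA n p.1 p.2 ∈ A})
    with hP
  have hmemP : ∀ p : Fin n × Fin n, p ∈ P ↔ (p.1 ≤ p.2 ∧ alphaA n p.1 p.2 ∈ A) := by
    intro p; simp [hP]
  have hAim : A = ↑(P.image fun p => alphaA n p.1 p.2) := by
    ext v
    simp only [Finset.coe_image, Set.mem_image, Finset.mem_coe]
    constructor
    · intro hv
      obtain ⟨i, j, hij, rfl⟩ := mem_posA_iff.mp (hsub hv)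
      exact ⟨(i,j), (hmemP _).mpr ⟨hij, hv⟩, rfl⟩
    · rintro ⟨p, hp, rfl⟩; exact ((hmemP p).mp hp).2
  have hfst : ∀ p ∈ P, ∀ q ∈ P, p.1 = q.1 → p = q := by
    intro p hp q hq hpq
    obtain ⟨hp1, hp2⟩ := (hmemP p).mp hp
    obtain ⟨hq1, hq2⟩ := (hmemP q).mp hq
    by_contra hne
    have hsnd : p.2 ≠ q.2 := fun h => hne (Prod.ext hpq h)
    have hαne : alphaA n p.1 p.2 ≠ alphaA n q.1 q.2 := by
      intro h; exact hsnd (alphaA_inj hp1 hq1 h).2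
    rcases le_total p.2 q.2 with h | h
    · exact hanti _ hp2 _ hq2 hαne ((leA_alphaA_iff hp1 hq1).mpr ⟨hpq.ge, h⟩)
    · exact hanti _ hq2 _ hp2 hαne.symm ((leA_alphaA_iff hq1 hp1).mpr ⟨hpq.le, h⟩)
  have hinjP : Set.InjOn (fun p : Fin n × Fin n => alphaA n p.1 p.2) ↑P := by
    intro p hp q hq h
    have h1 := ((hmemP p).mp (Finset.mem_coe.mp hp)).1
    have h2 := ((hmemP q).mp (Finset.mem_coe.mp hq)).1
    obtain ⟨e1, e2⟩ := alphaA_inj h1 h2 h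
    exact Prod.ext e1 e2
  have hcardP : P.card = s := by
    have hh : (P.image fun p => alphaA n p.1 p.2).card = P.card :=
      Finset.card_image_of_injOn hinjP
    rw [← hcard, hAim, Set.ncard_coe_finset, hh]
  have hinjfst : Set.InjOn (Prod.fst : Fin n × Fin n → Fin n) ↑P := by
    intro p hp q hq h
    exact hfst p (Finset.mem_coe.mp hp) q (Finset.mem_coe.mp hq) h
  set I : Finset (Fin n) := P.image Prod.fst with hI
  have hcardI : I.card = s := by
    rw [hI, Finset.card_image_of_injOn hinjfst, hcardP]
  set ii : Fin s → Fin n := ⇑(I.orderEmbOfFin hcardI) with hii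
  have hiiI : ∀ k, ii k ∈ I := fun k => Finset.orderEmbOfFin_mem I hcardI k
  have hex : ∀ k : Fin s, ∃ j, (ii k, j) ∈ P := by
    intro k
    have h := hiiI k
    rw [hI, Finset.mem_image] at h
    obtain ⟨p, hp, hp1⟩ := h
    exact ⟨p.2, by rwa [show (ii k, p.2) = p from Prod.ext hp1.symm rfl]⟩
  set jj : Fin s → Fin n := fun k => (hex k).choose with hjj
  have hjjP : ∀ k, (ii k, jj k) ∈ P := fun k => (hex k).choose_spec
  have hroot : ∀ k, ii k ≤ jj k := fun k => ((hmemP _).mp (hjjP k)).1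
  have hmem : ∀ k, alphaA n (ii k) (jj k) ∈ A := fun k => ((hmemP _).mp (hjjP k)).2
  have hiimono : StrictMono ii := (I.orderEmbOfFin hcardI).strictMono
  have hjjmono : StrictMono jj := by
    intro k k' hkk
    have hii' : ii k < ii k' := hiimono hkk
    have hne : alphaA n (ii k') (jj k') ≠ alphaA n (ii k) (jj k) := by
      intro h
      exact absurd (alphaA_inj (hroot k') (hroot k) h).1 (ne_of_gt hii')
    have hh := hanti _ (hmem k') _ (hmem k) hne
    rw [leA_alphaA_iff (hroot k') (hroot k)] at hh
    push_neg at hh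
    exact hh hii'.le
  have hcross : ∀ k l, ii k ≤ jj l := by
    intro k l
    by_contra hkl
    have hlt : jj l < ii k := not_le.mp hkl
    have hlk : l < k := by
      by_contra hlk'
      have hkl2 : k ≤ l := not_lt.mp hlk'
      have : ii k ≤ ii l := hiimono.le_iff_le.mpr hkl2
      exact absurd (le_trans this (hroot l)) hkl
    have hjlk : jj l < jj k := hjjmono hlk
    have hjlkv : ((jj l : ℕ)) < ((jj k : ℕ)) := hjlk
    have hjkn : ((jj k : ℕ)) < n := (jj k).isLt
    have hltv : ((jj l : ℕ)) < ((ii k : ℕ)) := hlt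
    set m : Fin n := ⟨(jj l : ℕ) + 1, by omega⟩ with hm
    have hmk : m ≤ jj k := Fin.le_def.mpr (by simp [hm]; omega)
    have hβPhi : alphaA n m (jj k) ∈ PhiOfA n A := by
      refine ⟨mem_posA_iff.mpr ⟨m, jj k, hmk, rfl⟩, alphaA n (ii k) (jj k), hmem k, ?_⟩
      rw [leA_alphaA_iff (hroot k) hmk]
      exact ⟨Fin.le_def.mpr (by simp [hm]; omega), le_refl _⟩
    have hαPhi : alphaA n (ii l) (jj l) ∈ PhiOfA n A :=
      ⟨hsub (hmem l), _, hmem l, leA_refl _⟩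
    exact habel _ hαPhi _ hβPhi (sum_alphaA_mem_typeA (hroot l) (by simp [hm]) hmk)
  refine ⟨ii, jj, hiimono, hjjmono, hcross, ?_⟩
  ext v
  constructor
  · intro hv
    obtain ⟨i, j, hij0, rfl⟩ := mem_posA_iff.mp (hsub hv)
    have hiI : i ∈ I := Finset.mem_image.mpr ⟨(i,j), (hmemP _).mpr ⟨hij0, hv⟩, rfl⟩
    have : i ∈ Set.range ii := by
      rw [hii, Finset.range_orderEmbOfFin]
      exact hiI
    obtain ⟨k, hk⟩ := this
    have hPel : (i, j) ∈ P := (hmemP _).mpr ⟨hij0, hv⟩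
    have : (ii k, jj k) = (i, j) := hfst _ (hjjP k) _ hPel hk
    refine ⟨k, ?_⟩
    rw [show i = ii k from (Prod.ext_iff.mp this).1.symm,
      show j = jj k from (Prod.ext_iff.mp this).2.symm]
  · rintro ⟨k, rfl⟩
    exact hmem k

def idx1 (s : ℕ) (k : Fin s) : Fin (2*s) := ⟨(k:ℕ), by have := k.isLt; omega⟩
def idx2 (s : ℕ) (k : Fin s) : Fin (2*s) := ⟨s + (k:ℕ), by have := k.isLt; omega⟩

noncomputable def eOf {n s : ℕ} (X : {X : Finset (Fin (n+1)) // X.card = 2*s}) :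
    Fin (2*s) → Fin (n+1) := ⇑(X.1.orderEmbOfFin X.2)

lemma eOf_strictMono {n s : ℕ} (X : {X : Finset (Fin (n+1)) // X.card = 2*s}) :
    StrictMono (eOf X) := (X.1.orderEmbOfFin X.2).strictMono

lemma eOf_lt {n s : ℕ} (X : {X : Finset (Fin (n+1)) // X.card = 2*s}) (k : Fin s) :
    ((eOf X (idx1 s k)) : ℕ) < ((eOf X (idx2 s k)) : ℕ) := by
  have h : idx1 s k < idx2 s k := by
    rw [Fin.lt_def]; simp [idx1, idx2]; have := k.isLt; omega
  exact eOf_strictMono X h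

noncomputable def FI {n s : ℕ} (X : {X : Finset (Fin (n+1)) // X.card = 2*s}) (k : Fin s) :
    Fin n :=
  ⟨((eOf X (idx1 s k)) : ℕ), by
    have h1 := eOf_lt X k
    have h2 := (eOf X (idx2 s k)).isLt
    omega⟩

noncomputable def FJ {n s : ℕ} (X : {X : Finset (Fin (n+1)) // X.card = 2*s}) (k : Fin s) :
    Fin n :=
  ⟨((eOf X (idx2 s k)) : ℕ) - 1, by
    have h1 := eOf_lt X k
    have h2 := (eOf X (idx2 s k)).isLt
    omega⟩

lemma FI_strictMono {n s : ℕ} (X : {X : Finset (Fin (n+1)) // X.card = 2*s}) :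
    StrictMono (FI X) := by
  intro k k' hkk
  have h : idx1 s k < idx1 s k' := by
    rw [Fin.lt_def]; simpa [idx1] using hkk
  have := eOf_strictMono X h
  rw [Fin.lt_def]
  exact this

lemma FJ_strictMono {n s : ℕ} (X : {X : Finset (Fin (n+1)) // X.card = 2*s}) :
    StrictMono (FJ X) := by
  intro k k' hkk
  have h : idx2 s k < idx2 s k' := by
    rw [Fin.lt_def]; simp [idx2]; exact hkk
  have h1 := eOf_strictMono X h
  have h2 := eOf_lt X k
  rw [Fin.lt_def]
  simp only [FJ]
  have h1' : ((eOf X (idx2 s k)) : ℕ) < ((eOf X (idx2 s k')) : ℕ) := h1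
  omega

lemma FI_le_FJ {n s : ℕ} (X : {X : Finset (Fin (n+1)) // X.card = 2*s}) (k l : Fin s) :
    FI X k ≤ FJ X l := by
  have h : idx1 s k < idx2 s l := by
    rw [Fin.lt_def]; simp [idx1, idx2]; have := k.isLt; omega
  have h1 : ((eOf X (idx1 s k)) : ℕ) < ((eOf X (idx2 s l)) : ℕ) := eOf_strictMono X h
  rw [Fin.le_def]
  simp only [FI, FJ]
  omega

noncomputable def Fmap {n s : ℕ} (X : {X : Finset (Fin (n+1)) // X.card = 2*s}) :
    Set (EuclideanSpace ℝ (Fin (n+1))) :=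
  Set.range fun k => alphaA n (FI X k) (FJ X k)

lemma exists_X {n s : ℕ} (ii jj : Fin s → Fin n) (h1 : StrictMono ii) (h2 : StrictMono jj)
    (hc : ∀ k l, ii k ≤ jj l) :
    ∃ X : {X : Finset (Fin (n+1)) // X.card = 2*s}, FI X = ii ∧ FJ X = jj := by
  classical
  set m : Fin (2*s) → Fin (n+1) := fun t =>
    if h : (t:ℕ) < s then (ii ⟨(t:ℕ), h⟩).castSucc
    else (jj ⟨(t:ℕ) - s, by have := t.isLt; omega⟩).succ with hm
  have hmono : StrictMono m := by
    intro t t' htt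
    have htt' : (t:ℕ) < (t':ℕ) := htt
    simp only [hm]
    by_cases h : (t:ℕ) < s <;> by_cases h' : (t':ℕ) < s
    · rw [dif_pos h, dif_pos h']
      exact h1 (Fin.mk_lt_mk.mpr htt')
    · rw [dif_pos h, dif_neg h']
      exact Nat.lt_succ_of_le (hc ⟨(t:ℕ), h⟩ ⟨(t':ℕ) - s, by have := t'.isLt; omega⟩)
    · omega
    · rw [dif_neg h, dif_neg h']
      exact Nat.succ_lt_succ (h2 (Fin.mk_lt_mk.mpr (by omega)))
  set X : Finset (Fin (n+1)) := Finset.image m Finset.univ with hX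
  have hcard : X.card = 2*s := by
    rw [hX, Finset.card_image_of_injective _ hmono.injective, Finset.card_univ,
      Fintype.card_fin]
  have hem : ⇑(X.orderEmbOfFin hcard) = m :=
    (Finset.orderEmbOfFin_unique hcard
      (fun t => Finset.mem_image_of_mem m (Finset.mem_univ t)) hmono).symm
  have heOf : eOf ⟨X, hcard⟩ = m := hem
  refine ⟨⟨X, hcard⟩, ?_, ?_⟩
  · funext k
    apply Fin.ext
    have hk := k.isLt
    have hval : (FI ⟨X, hcard⟩ k : ℕ) = (m (idx1 s k) : ℕ) := by
      simp only [FI, heOf]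
    rw [hval]
    simp only [hm]
    rw [dif_pos (show ((idx1 s k : Fin (2*s)) : ℕ) < s from hk)]
    rfl
  · funext k
    apply Fin.ext
    have hk := k.isLt
    have hval : (FJ ⟨X, hcard⟩ k : ℕ) = (m (idx2 s k) : ℕ) - 1 := by
      simp only [FJ, heOf]
    rw [hval]
    simp only [hm]
    rw [dif_neg (show ¬ ((idx2 s k : Fin (2*s)) : ℕ) < s from by simp only [idx2]; omega)]
    have hkk : ∀ pf : ((idx2 s k : Fin (2*s)) : ℕ) - s < s,
        (⟨((idx2 s k : Fin (2*s)) : ℕ) - s, pf⟩ : Fin s) = k := fun pf =>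
      Fin.ext (by simp only [idx2]; omega)
    rw [hkk _]
    simp [Fin.val_succ]

lemma repr_unique {n s : ℕ} {ii jj ii' jj' : Fin s → Fin n} (h1 : StrictMono ii)
    (h2 : StrictMono jj) (hc : ∀ k l, ii k ≤ jj l) (h1' : StrictMono ii')
    (h2' : StrictMono jj') (hc' : ∀ k l, ii' k ≤ jj' l)
    (hr : Set.range (fun k => alphaA n (ii k) (jj k)) =
          Set.range (fun k => alphaA n (ii' k) (jj' k))) : ii = ii' ∧ jj = jj' := by
  classical
  have hroot : ∀ k, ii k ≤ jj k := fun k => hc k k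
  have hroot' : ∀ k, ii' k ≤ jj' k := fun k => hc' k k
  have hfwd : ∀ k, ∃ k', ii' k' = ii k ∧ jj' k' = jj k := by
    intro k
    have hmm : alphaA n (ii k) (jj k) ∈
        Set.range (fun k => alphaA n (ii' k) (jj' k)) := hr ▸ ⟨k, rfl⟩
    obtain ⟨k', hk'⟩ := hmm
    obtain ⟨e1, e2⟩ := alphaA_inj (hroot' k') (hroot k) hk'
    exact ⟨k', e1, e2⟩
  have hbwd : ∀ k, ∃ k', ii k' = ii' k ∧ jj k' = jj' k := by
    intro k
    have hmm : alphaA n (ii' k) (jj' k) ∈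
        Set.range (fun k => alphaA n (ii k) (jj k)) := hr.symm ▸ ⟨k, rfl⟩
    obtain ⟨k', hk'⟩ := hmm
    obtain ⟨e1, e2⟩ := alphaA_inj (hroot k') (hroot' k) hk'
    exact ⟨k', e1, e2⟩
  set I : Finset (Fin n) := Finset.image ii Finset.univ with hI
  have hII' : ∀ k, ii' k ∈ I := by
    intro k
    obtain ⟨k', e1, _⟩ := hbwd k
    rw [hI, Finset.mem_image]
    exact ⟨k', Finset.mem_univ _, e1⟩
  have hcardI : I.card = s := by
    rw [hI, Finset.card_image_of_injective _ h1.injective, Finset.card_univ, Fintype.card_fin]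
  have e1 : ii = ⇑(I.orderEmbOfFin hcardI) :=
    Finset.orderEmbOfFin_unique hcardI
      (fun k => by rw [hI, Finset.mem_image]; exact ⟨k, Finset.mem_univ _, rfl⟩) h1
  have e2 : ii' = ⇑(I.orderEmbOfFin hcardI) :=
    Finset.orderEmbOfFin_unique hcardI hII' h1'
  have hiie : ii = ii' := e1.trans e2.symm
  refine ⟨hiie, ?_⟩
  funext k
  obtain ⟨k', f1, f2⟩ := hfwd k
  have hk : k' = k := h1'.injective (by rw [f1, hiie])
  rw [← f2, hk]

lemma Fmap_inj {n s : ℕ} : Function.Injective (Fmap (n := n) (s := s)) := by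
  intro X X' h
  obtain ⟨hFI, hFJ⟩ := repr_unique (FI_strictMono X) (FJ_strictMono X) (FI_le_FJ X)
    (FI_strictMono X') (FJ_strictMono X') (FI_le_FJ X') h
  have he : ⇑(X.1.orderEmbOfFin X.2) = ⇑(X'.1.orderEmbOfFin X'.2) := by
    funext t
    apply Fin.ext
    by_cases ht : (t:ℕ) < s
    · have h1 : t = idx1 s ⟨(t:ℕ), ht⟩ := Fin.ext rfl
      rw [h1]
      have hFIt := congrFun hFI ⟨(t:ℕ), ht⟩
      show ((eOf X (idx1 s ⟨(t:ℕ), ht⟩)) : ℕ) = ((eOf X' (idx1 s ⟨(t:ℕ), ht⟩)) : ℕ)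
      exact congrArg (Fin.val : Fin n → ℕ) hFIt
    · have hts : (t:ℕ) - s < s := by have := t.isLt; omega
      set k : Fin s := ⟨(t:ℕ) - s, hts⟩ with hk
      have h1 : t = idx2 s k := Fin.ext (by simp [idx2, hk]; omega)
      rw [h1]
      have hge : 1 ≤ ((eOf X (idx2 s k)) : ℕ) := by have := eOf_lt X k; omega
      have hge' : 1 ≤ ((eOf X' (idx2 s k)) : ℕ) := by have := eOf_lt X' k; omega
      have := congrArg Fin.val (congrFun hFJ k)
      simp only [FJ] at this
      have heq : ((eOf X (idx2 s k)) : ℕ) - 1 = ((eOf X' (idx2 s k)) : ℕ) - 1 := this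
      show ((eOf X (idx2 s k)) : ℕ) = ((eOf X' (idx2 s k)) : ℕ)
      omega
  apply Subtype.ext
  apply Finset.coe_injective
  rw [← Finset.range_orderEmbOfFin X.1 X.2, ← Finset.range_orderEmbOfFin X'.1 X'.2, he]

lemma countD (n s : ℕ) :
    {A : Set (EuclideanSpace ℝ (Fin (n+1))) | ∃ ii jj : Fin s → Fin n, StrictMono ii ∧
      StrictMono jj ∧ (∀ k l : Fin s, ii k ≤ jj l) ∧
      A = Set.range fun k => alphaA n (ii k) (jj k)}.ncard = (n+1).choose (2*s) := by
  have hD : {A : Set (EuclideanSpace ℝ (Fin (n+1))) | ∃ ii jj : Fin s → Fin n, StrictMono ii ∧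
      StrictMono jj ∧ (∀ k l : Fin s, ii k ≤ jj l) ∧
      A = Set.range fun k => alphaA n (ii k) (jj k)} = Set.range (Fmap (n := n) (s := s)) := by
    ext A
    constructor
    · rintro ⟨ii, jj, h1, h2, hcr, rfl⟩
      obtain ⟨X, hFI, hFJ⟩ := exists_X ii jj h1 h2 hcr
      exact ⟨X, by rw [Fmap, hFI, hFJ]⟩
    · rintro ⟨X, rfl⟩
      exact ⟨FI X, FJ X, FI_strictMono X, FJ_strictMono X, FI_le_FJ X, rfl⟩
  rw [hD, ← Nat.card_coe_set_eq, Nat.card_range_of_injective Fmap_inj,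
    Nat.card_eq_fintype_card, Fintype.card_finset_len, Fintype.card_fin]

end Stmt8aux


/-- In type `A_n`, for `s ≥ 1` the abelian antichains of cardinality `s` are exactly
the sets `{α_{i_k, j_k}}` with `i_1 < ⋯ < i_s ≤ j_1 < ⋯ < j_s`, and there are
`C(n, 2s) + C(n, 2s-1)` of them. -/
theorem stmt_8 (n s : ℕ) (hs : 1 ≤ s) :
    ({A : Set (EuclideanSpace ℝ (Fin (n + 1))) |
        IsAbelianAntichainA n A ∧ A.ncard = s} =
      {A | ∃ ii jj : Fin s → Fin n, StrictMono ii ∧ StrictMono jj ∧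
        (∀ k l : Fin s, ii k ≤ jj l) ∧
        A = Set.range fun k => alphaA n (ii k) (jj k)}) ∧
    {A : Set (EuclideanSpace ℝ (Fin (n + 1))) |
        IsAbelianAntichainA n A ∧ A.ncard = s}.ncard =
      n.choose (2 * s) + n.choose (2 * s - 1) := by
  have hset : ({A : Set (EuclideanSpace ℝ (Fin (n + 1))) |
        IsAbelianAntichainA n A ∧ A.ncard = s} =
      {A | ∃ ii jj : Fin s → Fin n, StrictMono ii ∧ StrictMono jj ∧
        (∀ k l : Fin s, ii k ≤ jj l) ∧
        A = Set.range fun k => alphaA n (ii k) (jj k)}) := by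
    ext A
    constructor
    · rintro ⟨hA, hcard⟩
      exact Stmt8aux.forward hA hcard
    · rintro ⟨ii, jj, h1, h2, hc, rfl⟩
      exact Stmt8aux.backward ii jj h1 h2 hc
  refine ⟨hset, ?_⟩
  rw [hset, Stmt8aux.countD n s]
  obtain ⟨r, rfl⟩ : ∃ r, s = r + 1 := ⟨s - 1, by omega⟩
  rw [show 2*(r+1) = (2*r+1)+1 from by omega, Nat.succ_sub_one, Nat.choose_succ_succ]
  exact Nat.add_comm _ _
end

section
/- In the root system of type A_n, the total number of abelian antichains in R⁺ (including the empty one) is 2^n. -/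
noncomputable section

namespace Stmt9

open Finset

variable {n : ℕ}

/-- partial sum functional -/
def PS (n : ℕ) (t : Fin (n + 1)) (v : EuclideanSpace ℝ (Fin (n + 1))) : ℝ :=
  ∑ a : Fin (n + 1), if a ≤ t then v a else 0

lemma PS_add (t : Fin (n + 1)) (x y : EuclideanSpace ℝ (Fin (n + 1))) :
    PS n t (x + y) = PS n t x + PS n t y := by
  unfold PS
  rw [← Finset.sum_add_distrib]
  refine Finset.sum_congr rfl fun a _ => ?_
  by_cases h : a ≤ t <;> simp [h]

lemma PS_zero (t : Fin (n + 1)) : PS n t (0 : EuclideanSpace ℝ (Fin (n + 1))) = 0 := by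
  unfold PS; simp

lemma PS_eps (t : Fin (n + 1)) (p : Fin (n + 1)) :
    PS n t (eps n p) = if p ≤ t then 1 else 0 := by
  unfold PS eps
  have : ∀ a : Fin (n+1), (if a ≤ t then (EuclideanSpace.single p (1:ℝ)) a else 0)
      = if a = p then (if p ≤ t then 1 else 0) else 0 := by
    intro a
    rw [EuclideanSpace.single_apply]
    by_cases h : a = p <;> by_cases h2 : a ≤ t <;> simp [h, h2] <;> simp [h] at h2 <;> simp [h2]
  rw [Finset.sum_congr rfl (fun a _ => this a), Finset.sum_ite_eq' Finset.univ p]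
  simp

lemma PS_sub_eps (t : Fin (n + 1)) (p q : Fin (n + 1)) :
    PS n t (eps n p - eps n q) = (if p ≤ t then 1 else 0) - (if q ≤ t then 1 else 0) := by
  have h : eps n p = (eps n p - eps n q) + eps n q := by abel
  have := PS_add t (eps n p - eps n q) (eps n q)
  rw [← h] at this
  rw [PS_eps, PS_eps] at this
  linarith

lemma PS_nonneg_of_mem {v : EuclideanSpace ℝ (Fin (n + 1))} (hv : v ∈ QplusA n)
    (t : Fin (n + 1)) : 0 ≤ PS n t v := by
  induction hv using AddSubmonoid.closure_induction with
  | mem x hx =>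
      obtain ⟨i, rfl⟩ := hx
      rw [simpleA, PS_sub_eps]
      have : i.succ ≤ t → i.castSucc ≤ t := fun h => le_trans (le_of_lt ((Fin.castSucc_lt_succ (i := i)))) h
      by_cases h : i.succ ≤ t <;> by_cases h2 : i.castSucc ≤ t <;> simp [h, h2] <;> exact absurd (this h) h2
  | zero => rw [PS_zero]
  | add x y _ _ hx hy => rw [PS_add]; linarith

lemma telescope (p q : Fin (n + 1)) (h : p ≤ q) : eps n p - eps n q ∈ QplusA n := by
  obtain ⟨q, hq⟩ := q
  induction q with
  | zero =>
      have : p = ⟨0, hq⟩ := le_antisymm h (Fin.mk_le_mk.mpr (Nat.zero_le _))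
      rw [this]; simp
  | succ m ih =>
      by_cases hp : p = ⟨m + 1, hq⟩
      · rw [hp]; simp
      · have hm : m < n + 1 := lt_trans (Nat.lt_succ_self m) hq
        have hpm : p ≤ ⟨m, hm⟩ := by
          have := Fin.mk_le_mk.mp h
          have : p.val ≤ m := by
            rcases Nat.lt_or_ge p.val (m+1) with h' | h'
            · omega
            · exfalso; exact hp (Fin.ext (le_antisymm (Fin.mk_le_mk.mp h) h'))
          exact this
        have hmem := ih hm hpm
        have hsimple : simpleA n ⟨m, by omega⟩ ∈ QplusA n :=
          AddSubmonoid.subset_closure ⟨⟨m, by omega⟩, rfl⟩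
        have key : eps n p - eps n ⟨m+1, hq⟩ =
            (eps n p - eps n ⟨m, hm⟩) + simpleA n ⟨m, by omega⟩ := by
          rw [simpleA]
          have h1 : Fin.castSucc (⟨m, by omega⟩ : Fin n) = (⟨m, hm⟩ : Fin (n+1)) := rfl
          have h2 : Fin.succ (⟨m, by omega⟩ : Fin n) = (⟨m+1, hq⟩ : Fin (n+1)) := rfl
          rw [h1, h2]; abel
        rw [key]
        exact (QplusA n).add_mem hmem hsimple


lemma leA_alpha_iff {i j k l : Fin n} (hij : i ≤ j) (hkl : k ≤ l) :
    leA n (alphaA n i j) (alphaA n k l) ↔ k ≤ i ∧ j ≤ l := by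
  constructor
  · intro h
    have hki : k ≤ i := by
      by_contra hc
      push_neg at hc  -- i < k
      have := PS_nonneg_of_mem h i.castSucc
      have hd : alphaA n k l - alphaA n i j
          = (eps n k.castSucc - eps n i.castSucc) + (eps n j.succ - eps n l.succ) := by
        unfold alphaA; abel
      rw [hd, PS_add, PS_sub_eps, PS_sub_eps] at this
      have h1 : ¬ (k.castSucc ≤ i.castSucc) := by
        simp [Fin.castSucc_le_castSucc_iff]; exact hc
      have h2 : (i.castSucc : Fin (n+1)) ≤ i.castSucc := le_refl _
      have h3 : ¬ (j.succ ≤ i.castSucc) := by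
        intro hcon
        exact absurd (lt_of_lt_of_le (Fin.castSucc_lt_succ_iff.mpr hij) hcon) (lt_irrefl _)
      have h4 : ¬ (l.succ ≤ i.castSucc) := by
        intro hcon
        have : i < l := lt_of_lt_of_le hc hkl
        exact absurd (lt_of_lt_of_le (Fin.castSucc_lt_succ_iff.mpr (le_of_lt this)) hcon) (lt_irrefl _)
      rw [if_neg h1, if_pos h2, if_neg h3, if_neg h4] at this
      norm_num at this
    refine ⟨hki, ?_⟩
    by_contra hc
    push_neg at hc  -- l < j
    have := PS_nonneg_of_mem h j.castSucc
    have hd : alphaA n k l - alphaA n i j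
        = (eps n k.castSucc - eps n i.castSucc) + (eps n j.succ - eps n l.succ) := by
      unfold alphaA; abel
    rw [hd, PS_add, PS_sub_eps, PS_sub_eps] at this
    have h2 : (i.castSucc : Fin (n+1)) ≤ j.castSucc := Fin.castSucc_le_castSucc_iff.mpr hij
    have h3 : ¬ (j.succ ≤ j.castSucc) := by
      intro hcon; exact absurd (lt_of_lt_of_le ((Fin.castSucc_lt_succ (i := j))) hcon) (lt_irrefl _)
    have h4 : l.succ ≤ j.castSucc := by
      rw [Fin.succ_le_castSucc_iff]; exact hc
    rw [if_pos h2, if_neg h3, if_pos h4] at this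
    rcases le_or_gt k.castSucc j.castSucc with h1 | h1
    · rw [if_pos h1] at this; norm_num at this
    · rw [if_neg (not_le.mpr h1)] at this; norm_num at this
  · rintro ⟨hki, hjl⟩
    have hd : alphaA n k l - alphaA n i j
        = (eps n k.castSucc - eps n i.castSucc) + (eps n j.succ - eps n l.succ) := by
      unfold alphaA; abel
    show _ ∈ QplusA n
    rw [hd]
    exact (QplusA n).add_mem
      (telescope _ _ (Fin.castSucc_le_castSucc_iff.mpr hki))
      (telescope _ _ (Fin.succ_le_succ_iff.mpr hjl))

lemma alphaA_inj {i j k l : Fin n} (hij : i ≤ j) (hkl : k ≤ l)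
    (h : alphaA n i j = alphaA n k l) : i = k ∧ j = l := by
  have h1 : leA n (alphaA n i j) (alphaA n k l) := by
    show _ ∈ QplusA n; rw [h]; simp
  have h2 : leA n (alphaA n k l) (alphaA n i j) := by
    show _ ∈ QplusA n; rw [h]; simp
  rw [leA_alpha_iff hij hkl] at h1
  rw [leA_alpha_iff hkl hij] at h2
  exact ⟨le_antisymm h2.1 h1.1, le_antisymm h1.2 h2.2⟩

lemma mem_posA_iff {v : EuclideanSpace ℝ (Fin (n + 1))} :
    v ∈ posA n ↔ ∃ i j : Fin n, i ≤ j ∧ v = alphaA n i j := by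
  constructor
  · rintro ⟨i, j, hlt, rfl⟩
    have hi : i.val < n := by
      have := hlt; have hj := j.isLt; omega
    have hj0 : 0 < j.val := by
      have := hlt; omega
    refine ⟨⟨i.val, hi⟩, ⟨j.val - 1, by omega⟩, by simp [Fin.le_def]; omega, ?_⟩
    have e1 : Fin.castSucc (⟨i.val, hi⟩ : Fin n) = i := by apply Fin.ext; simp
    have e2 : Fin.succ (⟨j.val - 1, by omega⟩ : Fin n) = j := by apply Fin.ext; simp; omega
    unfold alphaA
    rw [e1, e2]
  · rintro ⟨i, j, hij, rfl⟩
    exact ⟨i.castSucc, j.succ, Fin.castSucc_lt_succ_iff.mpr hij, rfl⟩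

lemma eps_apply (p a : Fin (n + 1)) : eps n p a = if a = p then 1 else 0 := by
  rw [eps, EuclideanSpace.single_apply]

lemma sum_mem_typeA_iff {i j k l : Fin n} (hij : i ≤ j) (hkl : k ≤ l) :
    alphaA n i j + alphaA n k l ∈ typeA n ↔
      j.succ = k.castSucc ∨ l.succ = i.castSucc := by
  constructor
  · rintro ⟨a, b, hab, hv⟩
    by_contra hc
    push_neg at hc
    obtain ⟨h1, h2⟩ := hc
    have key : ∀ x : Fin (n+1),
        (eps n i.castSucc x + eps n k.castSucc x) - (eps n j.succ x + eps n l.succ x)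
          = eps n a x - eps n b x := by
      intro x
      have h5 : (alphaA n i j + alphaA n k l) x = (eps n a - eps n b) x := by rw [hv]
      unfold alphaA at h5
      simp only [PiLp.add_apply, PiLp.sub_apply] at h5
      linarith
    have c1 : (j.succ : Fin (n+1)) ≠ i.castSucc := ne_of_gt (Fin.castSucc_lt_succ_iff.mpr hij)
    have c2 : (l.succ : Fin (n+1)) ≠ k.castSucc := ne_of_gt (Fin.castSucc_lt_succ_iff.mpr hkl)
    by_cases hjl : (j.succ : Fin (n+1)) = l.succ
    · have e1 := key j.succ
      simp only [eps_apply] at e1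
      rw [if_neg c1, if_neg h1, if_pos trivial, if_pos hjl] at e1
      split_ifs at e1 <;> norm_num at e1
    · have hb1 : (j.succ : Fin (n+1)) = b := by
        by_contra hbb
        have e1 := key j.succ
        simp only [eps_apply] at e1
        rw [if_neg c1, if_neg h1, if_pos trivial, if_neg hjl, if_neg hbb] at e1
        split_ifs at e1 <;> norm_num at e1
      have hb2 : (l.succ : Fin (n+1)) = b := by
        by_contra hbb
        have e2 := key l.succ
        simp only [eps_apply] at e2
        rw [if_neg h2, if_neg c2, if_neg (Ne.symm hjl), if_pos trivial, if_neg hbb] at e2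
        split_ifs at e2 <;> norm_num at e2
      exact hjl (hb1.trans hb2.symm)
  · intro h
    rcases h with h | h
    · refine ⟨i.castSucc, l.succ, ?_, ?_⟩
      · have : i.castSucc < l.succ := by
          calc i.castSucc ≤ j.castSucc := Fin.castSucc_le_castSucc_iff.mpr hij
          _ < j.succ := (Fin.castSucc_lt_succ (i := j))
          _ = k.castSucc := h
          _ ≤ l.castSucc := Fin.castSucc_le_castSucc_iff.mpr hkl
          _ < l.succ := (Fin.castSucc_lt_succ (i := l))
        exact ne_of_lt this
      · unfold alphaA; rw [h]; abel
    · refine ⟨k.castSucc, j.succ, ?_, ?_⟩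
      · have : k.castSucc < j.succ := by
          calc k.castSucc ≤ l.castSucc := Fin.castSucc_le_castSucc_iff.mpr hkl
          _ < l.succ := (Fin.castSucc_lt_succ (i := l))
          _ = i.castSucc := h
          _ ≤ j.castSucc := Fin.castSucc_le_castSucc_iff.mpr hij
          _ < j.succ := (Fin.castSucc_lt_succ (i := j))
        exact ne_of_lt this
      · unfold alphaA; rw [h]; abel


/-- combinatorial abelian antichain -/
def Good (n : ℕ) (S : Set (Fin n × Fin n)) : Prop :=
  (∀ p ∈ S, ∀ q ∈ S, p ≠ q → ¬(q.1 ≤ p.1 ∧ p.2 ≤ q.2)) ∧ (∀ p ∈ S, ∀ q ∈ S, q.1 ≤ p.2)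

def toA (n : ℕ) (S : Set (Fin n × Fin n)) : Set (EuclideanSpace ℝ (Fin (n + 1))) :=
  (fun p : Fin n × Fin n => alphaA n p.1 p.2) '' S

def toS (n : ℕ) (A : Set (EuclideanSpace ℝ (Fin (n + 1)))) : Set (Fin n × Fin n) :=
  {p | p.1 ≤ p.2 ∧ alphaA n p.1 p.2 ∈ A}

lemma Good.le {S : Set (Fin n × Fin n)} (hG : Good n S) {p : Fin n × Fin n} (hp : p ∈ S) :
    p.1 ≤ p.2 := hG.2 p hp p hp

lemma leA_refl (v : EuclideanSpace ℝ (Fin (n + 1))) : leA n v v := by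
  show _ ∈ QplusA n
  rw [sub_self]
  exact (QplusA n).zero_mem

lemma good_toA {S : Set (Fin n × Fin n)} (hG : Good n S) :
    IsAbelianAntichainA n (toA n S) := by
  constructor
  · constructor
    · rintro _ ⟨p, hp, rfl⟩
      exact mem_posA_iff.mpr ⟨p.1, p.2, hG.le hp, rfl⟩
    · rintro _ ⟨p, hp, rfl⟩ _ ⟨q, hq, rfl⟩ hne hle
      have hpq : p ≠ q := fun h => hne (by rw [h])
      rw [leA_alpha_iff (hG.le hp) (hG.le hq)] at hle
      exact hG.1 p hp q hq hpq ⟨hle.1, hle.2⟩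
  · rintro α ⟨hαpos, _, ⟨p, hp, rfl⟩, hle1⟩ β ⟨hβpos, _, ⟨q, hq, rfl⟩, hle2⟩ hsum
    obtain ⟨a, b, hab, rfl⟩ := mem_posA_iff.mp hαpos
    obtain ⟨c, d, hcd, rfl⟩ := mem_posA_iff.mp hβpos
    rw [leA_alpha_iff (hG.le hp) hab] at hle1
    rw [leA_alpha_iff (hG.le hq) hcd] at hle2
    rw [sum_mem_typeA_iff hab hcd] at hsum
    rcases hsum with h | h
    · -- b.succ = c.castSucc, so b < c; but c ≤ q.1 ≤ p.2 ≤ b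
      have hbc : b < c := by
        have := (Fin.castSucc_lt_succ (i := b))
        rw [h] at this
        exact Fin.castSucc_lt_castSucc_iff.mp this
      have : c ≤ b := le_trans hle2.1 (le_trans (hG.2 p hp q hq) hle1.2)
      exact absurd hbc (not_lt.mpr this)
    · have hda : d < a := by
        have := (Fin.castSucc_lt_succ (i := d))
        rw [h] at this
        exact Fin.castSucc_lt_castSucc_iff.mp this
      have : a ≤ d := le_trans hle1.1 (le_trans (hG.2 q hq p hp) hle2.2)
      exact absurd hda (not_lt.mpr this)

lemma toS_toA {S : Set (Fin n × Fin n)} (hG : Good n S) : toS n (toA n S) = S := by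
  ext p
  constructor
  · rintro ⟨hle, q, hq, heq⟩
    obtain ⟨h1, h2⟩ := alphaA_inj (hG.le hq) hle heq
    have : q = p := Prod.ext h1 h2
    rwa [← this]
  · intro hp
    exact ⟨hG.le hp, p, hp, rfl⟩

lemma good_toS {A : Set (EuclideanSpace ℝ (Fin (n + 1)))} (hA : IsAbelianAntichainA n A) :
    Good n (toS n A) := by
  constructor
  · rintro p ⟨hple, hpA⟩ q ⟨hqle, hqA⟩ hne hcomp
    have hroots : alphaA n p.1 p.2 ≠ alphaA n q.1 q.2 := by
      intro h
      obtain ⟨h1, h2⟩ := alphaA_inj hple hqle h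
      exact hne (Prod.ext h1 h2)
    exact hA.1.2 _ hpA _ hqA hroots ((leA_alpha_iff hple hqle).mpr ⟨hcomp.1, hcomp.2⟩)
  · rintro p ⟨hple, hpA⟩ q ⟨hqle, hqA⟩
    by_contra hc
    push_neg at hc
    -- hc : p.2 < q.1
    have h1 : (1 : ℕ) ≤ q.1.val := by
      have := hc
      rw [Fin.lt_def] at this
      omega
    set k' : Fin n := ⟨q.1.val - 1, by have := q.1.isLt; omega⟩ with hk'
    have hks : k'.succ = q.1.castSucc := by
      apply Fin.ext
      simp [hk']
      omega
    have hp1k : p.1 ≤ k' := by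
      rw [Fin.le_def]
      have h3 : p.1.val ≤ p.2.val := hple
      have h4 : p.2.val < q.1.val := hc
      simp [hk']
      omega
    have hp2k : p.2 ≤ k' := by
      rw [Fin.le_def]
      have h4 : p.2.val < q.1.val := hc
      simp [hk']
      omega
    have hαmem : alphaA n p.1 k' ∈ PhiOfA n A :=
      ⟨mem_posA_iff.mpr ⟨p.1, k', hp1k, rfl⟩,
        alphaA n p.1 p.2, hpA, (leA_alpha_iff hple hp1k).mpr ⟨le_refl _, hp2k⟩⟩
    have hβmem : alphaA n q.1 q.2 ∈ PhiOfA n A :=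
      ⟨mem_posA_iff.mpr ⟨q.1, q.2, hqle, rfl⟩, alphaA n q.1 q.2, hqA, leA_refl _⟩
    exact hA.2 _ hαmem _ hβmem ((sum_mem_typeA_iff hp1k hqle).mpr (Or.inl hks))

lemma toA_toS {A : Set (EuclideanSpace ℝ (Fin (n + 1)))} (hA : IsAbelianAntichainA n A) :
    toA n (toS n A) = A := by
  ext α
  constructor
  · rintro ⟨p, ⟨hle, hmem⟩, rfl⟩
    exact hmem
  · intro hα
    obtain ⟨i, j, hij, rfl⟩ := mem_posA_iff.mp (hA.1.1 hα)
    exact ⟨(i, j), ⟨hij, hα⟩, rfl⟩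

lemma ncard_abelian_eq_ncard_good (n : ℕ) :
    {A : Set (EuclideanSpace ℝ (Fin (n + 1))) | IsAbelianAntichainA n A}.ncard =
      {S : Set (Fin n × Fin n) | Good n S}.ncard := by
  have himg : toA n '' {S | Good n S} = {A | IsAbelianAntichainA n A} := by
    ext A
    constructor
    · rintro ⟨S, hS, rfl⟩
      exact good_toA hS
    · intro hA
      exact ⟨toS n A, good_toS hA, toA_toS hA⟩
  rw [← himg]
  exact Set.ncard_image_of_injOn fun S1 h1 S2 h2 heq => by
    rw [← toS_toA h1, ← toS_toA h2, heq]


open scoped Classical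

/-- map a combinatorial antichain to the finset of its endpoints -/
def FofS (n : ℕ) (S : Set (Fin n × Fin n)) : Finset (Fin (n + 1)) :=
  (Set.toFinite S).toFinset.image (fun p => p.1.castSucc) ∪
    (Set.toFinite S).toFinset.image (fun p => p.2.succ)

lemma mem_FofS {S : Set (Fin n × Fin n)} {x : Fin (n + 1)} :
    x ∈ FofS n S ↔ (∃ p ∈ S, p.1.castSucc = x) ∨ (∃ p ∈ S, p.2.succ = x) := by
  simp only [FofS, Finset.mem_union, Finset.mem_image, Set.Finite.mem_toFinset]

lemma fst_injOn {S : Set (Fin n × Fin n)} (hG : Good n S) {p q : Fin n × Fin n}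
    (hp : p ∈ S) (hq : q ∈ S) (h : p.1 = q.1) : p = q := by
  by_contra hne
  rcases le_or_gt p.2 q.2 with h2 | h2
  · exact hG.1 p hp q hq hne ⟨le_of_eq h.symm, h2⟩
  · exact hG.1 q hq p hp (fun hh => hne hh.symm) ⟨le_of_eq h, le_of_lt h2⟩

lemma snd_injOn {S : Set (Fin n × Fin n)} (hG : Good n S) {p q : Fin n × Fin n}
    (hp : p ∈ S) (hq : q ∈ S) (h : p.2 = q.2) : p = q := by
  by_contra hne
  rcases le_or_gt p.1 q.1 with h2 | h2
  · exact hG.1 q hq p hp (fun hh => hne hh.symm) ⟨h2, le_of_eq h.symm⟩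
  · exact hG.1 p hp q hq hne ⟨le_of_lt h2, le_of_eq h⟩

lemma no_collision {S : Set (Fin n × Fin n)} (hG : Good n S) {p q : Fin n × Fin n}
    (hp : p ∈ S) (hq : q ∈ S) : p.1.castSucc ≠ q.2.succ := by
  have h : p.1 ≤ q.2 := hG.2 q hq p hp
  exact ne_of_lt (lt_of_le_of_lt (Fin.castSucc_le_castSucc_iff.mpr h) ((Fin.castSucc_lt_succ (i := q.2))))

lemma card_FofS {S : Set (Fin n × Fin n)} (hG : Good n S) :
    (FofS n S).card = 2 * S.ncard := by
  rw [FofS, Finset.card_union_of_disjoint, Finset.card_image_of_injOn,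
      Finset.card_image_of_injOn]
  · rw [← Set.ncard_eq_toFinset_card S (Set.toFinite S)]
    ring
  · intro p hp q hq h
    rw [Finset.mem_coe, Set.Finite.mem_toFinset] at hp hq
    exact snd_injOn hG hp hq (Fin.succ_injective _ h)
  · intro p hp q hq h
    rw [Finset.mem_coe, Set.Finite.mem_toFinset] at hp hq
    exact fst_injOn hG hp hq (Fin.castSucc_injective _ h)
  · rw [Finset.disjoint_left]
    rintro x hx1 hx2
    simp only [Finset.mem_image, Set.Finite.mem_toFinset] at hx1 hx2
    obtain ⟨p, hp, rfl⟩ := hx1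
    obtain ⟨q, hq, hpq⟩ := hx2
    exact no_collision hG hp hq hpq.symm

/-- rank of x in T -/
def rk (T : Finset (Fin (n + 1))) (x : Fin (n + 1)) : ℕ := (T.filter (fun y => y ≤ x)).card

lemma rk_strictMono {T : Finset (Fin (n + 1))} {x y : Fin (n + 1)} (hy : y ∈ T)
    (hxy : x < y) : rk T x < rk T y := by
  apply Finset.card_lt_card
  constructor
  · exact Finset.filter_subset_filter _ (le_refl T) |>.trans (le_refl _) |>.trans
      (by intro z hz; simp only [Finset.mem_filter] at hz ⊢; exact ⟨hz.1, le_trans hz.2 (le_of_lt hxy)⟩)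
  · intro hsub
    have : y ∈ T.filter (fun z => z ≤ x) := hsub (by simp [hy])
    simp only [Finset.mem_filter] at this
    exact absurd (lt_of_lt_of_le hxy this.2) (lt_irrefl _)

lemma rk_injOn {T : Finset (Fin (n + 1))} {x y : Fin (n + 1)} (hx : x ∈ T) (hy : y ∈ T)
    (h : rk T x = rk T y) : x = y := by
  rcases lt_trichotomy x y with hc | hc | hc
  · exact absurd h (ne_of_lt (rk_strictMono hy hc))
  · exact hc
  · exact absurd h.symm (ne_of_lt (rk_strictMono hx hc))

lemma rk_fst {S : Set (Fin n × Fin n)} (hG : Good n S) {p : Fin n × Fin n} (hp : p ∈ S) :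
    rk (FofS n S) p.1.castSucc =
      ((Set.toFinite S).toFinset.filter (fun q => q.1 ≤ p.1)).card := by
  rw [rk]
  rw [show (FofS n S).filter (fun y => y ≤ p.1.castSucc) =
      ((Set.toFinite S).toFinset.filter (fun q => q.1 ≤ p.1)).image
        (fun q => q.1.castSucc) from ?_]
  · apply Finset.card_image_of_injOn
    intro a ha b hb h
    simp only [Finset.coe_filter, Set.mem_setOf_eq, Set.Finite.mem_toFinset] at ha hb
    exact fst_injOn hG ha.1 hb.1 (Fin.castSucc_injective _ h)
  · ext x
    simp only [Finset.mem_filter, Finset.mem_image, Set.Finite.mem_toFinset, mem_FofS]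
    constructor
    · rintro ⟨hxT, hxle⟩
      rcases hxT with ⟨q, hq, rfl⟩ | ⟨q, hq, rfl⟩
      · exact ⟨q, ⟨hq, Fin.castSucc_le_castSucc_iff.mp hxle⟩, rfl⟩
      · exfalso
        have h : q.2.succ > p.1.castSucc := by
          have := hG.2 q hq p hp
          exact lt_of_le_of_lt (Fin.castSucc_le_castSucc_iff.mpr this) ((Fin.castSucc_lt_succ (i := q.2)))
        exact absurd hxle (not_le.mpr h)
    · rintro ⟨q, ⟨hq, hle⟩, rfl⟩
      exact ⟨Or.inl ⟨q, hq, rfl⟩, Fin.castSucc_le_castSucc_iff.mpr hle⟩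

lemma rk_snd {S : Set (Fin n × Fin n)} (hG : Good n S) {p : Fin n × Fin n} (hp : p ∈ S) :
    rk (FofS n S) p.2.succ =
      S.ncard + ((Set.toFinite S).toFinset.filter (fun q => q.2 ≤ p.2)).card := by
  rw [rk]
  rw [show (FofS n S).filter (fun y => y ≤ p.2.succ) =
      (Set.toFinite S).toFinset.image (fun q => q.1.castSucc) ∪
        ((Set.toFinite S).toFinset.filter (fun q => q.2 ≤ p.2)).image
          (fun q => q.2.succ) from ?_]
  · rw [Finset.card_union_of_disjoint, Finset.card_image_of_injOn, Finset.card_image_of_injOn]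
    · rw [← Set.ncard_eq_toFinset_card S (Set.toFinite S)]
    · intro a ha b hb h
      simp only [Finset.coe_filter, Set.mem_setOf_eq, Set.Finite.mem_toFinset] at ha hb
      exact snd_injOn hG ha.1 hb.1 (Fin.succ_injective _ h)
    · intro a ha b hb h
      rw [Finset.mem_coe, Set.Finite.mem_toFinset] at ha hb
      exact fst_injOn hG ha hb (Fin.castSucc_injective _ h)
    · rw [Finset.disjoint_left]
      rintro x hx1 hx2
      simp only [Finset.mem_image, Finset.mem_filter, Set.Finite.mem_toFinset] at hx1 hx2
      obtain ⟨q, hq, rfl⟩ := hx1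
      obtain ⟨r, ⟨hr, _⟩, hqr⟩ := hx2
      exact no_collision hG hq hr hqr.symm
  · ext x
    simp only [Finset.mem_filter, Finset.mem_union, Finset.mem_image, Set.Finite.mem_toFinset,
      mem_FofS]
    constructor
    · rintro ⟨hxT, hxle⟩
      rcases hxT with ⟨q, hq, rfl⟩ | ⟨q, hq, rfl⟩
      · exact Or.inl ⟨q, hq, rfl⟩
      · exact Or.inr ⟨q, ⟨hq, Fin.succ_le_succ_iff.mp hxle⟩, rfl⟩
    · rintro (⟨q, hq, rfl⟩ | ⟨q, ⟨hq, hle⟩, rfl⟩)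
      · refine ⟨Or.inl ⟨q, hq, rfl⟩, ?_⟩
        exact le_trans (Fin.castSucc_le_castSucc_iff.mpr (hG.2 p hp q hq)) (Fin.castSucc_le_succ p.2)
      · exact ⟨Or.inr ⟨q, hq, rfl⟩, Fin.succ_le_succ_iff.mpr hle⟩

lemma filter_fst_eq_snd {S : Set (Fin n × Fin n)} (hG : Good n S) {p : Fin n × Fin n}
    (hp : p ∈ S) :
    (Set.toFinite S).toFinset.filter (fun q => q.1 ≤ p.1) =
      (Set.toFinite S).toFinset.filter (fun q => q.2 ≤ p.2) := by
  apply Finset.filter_congr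
  intro q hq
  rw [Set.Finite.mem_toFinset] at hq
  by_cases hqp : q = p
  · subst hqp; exact iff_of_true le_rfl le_rfl
  · constructor
    · intro h1
      by_contra h2
      push_neg at h2
      exact hG.1 p hp q hq (fun hh => hqp hh.symm) ⟨h1, le_of_lt h2⟩
    · intro h1
      by_contra h2
      push_neg at h2
      exact hG.1 q hq p hp hqp ⟨le_of_lt h2, h1⟩

lemma rk_snd_eq {S : Set (Fin n × Fin n)} (hG : Good n S) {p : Fin n × Fin n} (hp : p ∈ S) :
    rk (FofS n S) p.2.succ = rk (FofS n S) p.1.castSucc + S.ncard := by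
  rw [rk_snd hG hp, rk_fst hG hp, filter_fst_eq_snd hG hp, Nat.add_comm]

lemma rk_fst_le {S : Set (Fin n × Fin n)} (hG : Good n S) {p : Fin n × Fin n} (hp : p ∈ S) :
    2 * rk (FofS n S) p.1.castSucc ≤ (FofS n S).card := by
  rw [card_FofS hG, rk_fst hG hp]
  have h := Finset.card_filter_le (Set.toFinite S).toFinset (fun q => q.1 ≤ p.1)
  rw [← Set.ncard_eq_toFinset_card S (Set.toFinite S)] at h
  omega

lemma mem_fst_of_rk_le {S : Set (Fin n × Fin n)} (hG : Good n S) {x : Fin (n + 1)}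
    (hx : x ∈ FofS n S) (hrk : 2 * rk (FofS n S) x ≤ (FofS n S).card) :
    ∃ p ∈ S, x = p.1.castSucc := by
  rw [mem_FofS] at hx
  rcases hx with ⟨p, hp, rfl⟩ | ⟨p, hp, rfl⟩
  · exact ⟨p, hp, rfl⟩
  · exfalso
    rw [rk_snd hG hp, card_FofS hG] at hrk
    have hmem : p ∈ (Set.toFinite S).toFinset.filter (fun q => q.2 ≤ p.2) := by
      rw [Finset.mem_filter, Set.Finite.mem_toFinset]
      exact ⟨hp, le_refl _⟩
    have := Finset.card_pos.mpr ⟨p, hmem⟩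
    omega


lemma FofS_subset {S1 S2 : Set (Fin n × Fin n)} (h1 : Good n S1) (h2 : Good n S2)
    (heq : FofS n S1 = FofS n S2) : S1 ⊆ S2 := by
  have hcard : S1.ncard = S2.ncard := by
    have e1 := card_FofS h1
    have e2 := card_FofS h2
    rw [heq, e2] at e1
    omega
  intro p hp
  have hxT : p.1.castSucc ∈ FofS n S2 := by
    rw [← heq]; exact mem_FofS.mpr (Or.inl ⟨p, hp, rfl⟩)
  have hyT : p.2.succ ∈ FofS n S2 := by
    rw [← heq]; exact mem_FofS.mpr (Or.inr ⟨p, hp, rfl⟩)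
  have hrk : 2 * rk (FofS n S2) p.1.castSucc ≤ (FofS n S2).card := by
    rw [← heq]; exact rk_fst_le h1 hp
  obtain ⟨q, hq, hxq⟩ := mem_fst_of_rk_le h2 hxT hrk
  have h1e : p.1 = q.1 := Fin.castSucc_injective _ hxq
  have hy1 : rk (FofS n S2) p.2.succ = rk (FofS n S2) p.1.castSucc + S1.ncard := by
    rw [← heq]; exact rk_snd_eq h1 hp
  have hy2 : rk (FofS n S2) q.2.succ = rk (FofS n S2) q.1.castSucc + S2.ncard :=
    rk_snd_eq h2 hq
  have hyy : rk (FofS n S2) p.2.succ = rk (FofS n S2) q.2.succ := by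
    rw [hy1, hy2, hcard, ← hxq]
  have hq2T : q.2.succ ∈ FofS n S2 := mem_FofS.mpr (Or.inr ⟨q, hq, rfl⟩)
  have h2e : p.2 = q.2 := Fin.succ_injective _ (rk_injOn hyT hq2T hyy)
  have : p = q := Prod.ext h1e h2e
  rwa [this]

lemma FofS_injOn : Set.InjOn (FofS n) {S | Good n S} := by
  intro S1 h1 S2 h2 heq
  exact le_antisymm (FofS_subset h1 h2 heq) (FofS_subset h2 h1 heq.symm)

lemma exists_good (T : Finset (Fin (n + 1))) (m : ℕ) (hm : T.card = m + m) :
    ∃ S : Set (Fin n × Fin n), Good n S ∧ FofS n S = T := by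
  set e := T.orderEmbOfFin hm with he
  let li : Fin m → Fin (m + m) := fun t => ⟨t.val, by omega⟩
  let hi : Fin m → Fin (m + m) := fun t => ⟨t.val + m, by have := t.isLt; omega⟩
  have hlt : ∀ t : Fin m, e (li t) < e (hi t) := by
    intro t
    apply e.strictMono
    rw [Fin.lt_def]
    have := t.isLt
    simp [li, hi]
    omega
  have hne_last : ∀ t : Fin m, e (li t) ≠ Fin.last n :=
    fun t => ne_of_lt (lt_of_lt_of_le (hlt t) (Fin.le_last _))
  have hne_zero : ∀ t : Fin m, e (hi t) ≠ 0 := by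
    intro t h
    have := hlt t
    rw [h] at this
    exact absurd this (Fin.not_lt_zero _)
  let f : Fin m → Fin n × Fin n :=
    fun t => ((e (li t)).castPred (hne_last t), (e (hi t)).pred (hne_zero t))
  have hf1 : ∀ t, (f t).1.castSucc = e (li t) := fun t => Fin.castSucc_castPred (e (li t)) (hne_last t)
  have hf2 : ∀ t, (f t).2.succ = e (hi t) := fun t => Fin.succ_pred (e (hi t)) (hne_zero t)
  refine ⟨Set.range f, ⟨?_, ?_⟩, ?_⟩
  · rintro p ⟨t, rfl⟩ q ⟨t', rfl⟩ hne
    have htt : t ≠ t' := fun h => hne (by rw [h])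
    rintro ⟨hq1, hp2⟩
    rcases lt_trichotomy t t' with hc | hc | hc
    · have : (f t).1 < (f t').1 := by
        rw [← Fin.castSucc_lt_castSucc_iff, hf1, hf1]
        exact e.strictMono (by rw [Fin.lt_def]; exact hc)
      exact absurd hq1 (not_le.mpr this)
    · exact htt hc
    · have : (f t').2 < (f t).2 := by
        rw [← Fin.succ_lt_succ_iff, hf2, hf2]
        exact e.strictMono (by rw [Fin.lt_def]; simpa [hi] using hc)
      exact absurd hp2 (not_le.mpr this)
  · rintro p ⟨t, rfl⟩ q ⟨t', rfl⟩
    rw [← Fin.castSucc_lt_succ_iff, hf1, hf2]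
    apply e.strictMono
    rw [Fin.lt_def]
    have := t'.isLt
    simp [li, hi]
    omega
  · ext x
    rw [mem_FofS]
    constructor
    · rintro (⟨p, ⟨t, rfl⟩, rfl⟩ | ⟨p, ⟨t, rfl⟩, rfl⟩)
      · rw [hf1]; exact Finset.orderEmbOfFin_mem T hm (li t)
      · rw [hf2]; exact Finset.orderEmbOfFin_mem T hm (hi t)
    · intro hx
      have : x ∈ Set.range e := by rw [he, Finset.range_orderEmbOfFin]; exact hx
      obtain ⟨k, hk⟩ := this
      rcases Nat.lt_or_ge k.val m with hc | hc
      · left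
        refine ⟨f ⟨k.val, hc⟩, ⟨⟨k.val, hc⟩, rfl⟩, ?_⟩
        rw [hf1, show li ⟨k.val, hc⟩ = k from Fin.ext rfl, hk]
      · right
        have hkm : k.val - m < m := by have := k.isLt; omega
        refine ⟨f ⟨k.val - m, hkm⟩, ⟨⟨k.val - m, hkm⟩, rfl⟩, ?_⟩
        rw [hf2, show hi ⟨k.val - m, hkm⟩ = k from Fin.ext (by simp [hi]; omega), hk]

lemma ncard_good_eq_ncard_even (n : ℕ) :
    {S : Set (Fin n × Fin n) | Good n S}.ncard =
      {T : Finset (Fin (n + 1)) | Even T.card}.ncard := by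
  have himg : FofS n '' {S | Good n S} = {T | Even T.card} := by
    ext T
    constructor
    · rintro ⟨S, hS, rfl⟩
      rw [Set.mem_setOf_eq, card_FofS hS]
      exact even_two_mul _
    · intro hT
      obtain ⟨m, hm⟩ := hT
      obtain ⟨S, hS, hconv⟩ := exists_good T m hm
      exact ⟨S, hS, hconv⟩
  rw [← himg, Set.ncard_image_of_injOn FofS_injOn]

lemma ncard_even (n : ℕ) :
    {T : Finset (Fin (n + 1)) | Even T.card}.ncard = 2 ^ n := by
  rw [Set.ncard_eq_toFinset_card', Set.toFinset_setOf]
  have key : (Finset.univ.filter fun T : Finset (Fin (n + 1)) => Even T.card).card =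
      (Finset.univ.filter fun T : Finset (Fin (n + 1)) => ¬ Even T.card).card := by
    apply Finset.card_bij'
      (i := fun T _ => if (0 : Fin (n + 1)) ∈ T then T.erase 0 else insert 0 T)
      (j := fun T _ => if (0 : Fin (n + 1)) ∈ T then T.erase 0 else insert 0 T)
    all_goals intro T hT
    case hi =>
      rw [Finset.mem_filter] at hT
      obtain ⟨-, hT⟩ := hT
      by_cases h0 : (0 : Fin (n + 1)) ∈ T
      · simp only [if_pos h0]
        refine Finset.mem_filter.mpr ⟨Finset.mem_univ _, ?_⟩
        rw [Finset.card_erase_of_mem h0]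
        have hpos : 0 < T.card := Finset.card_pos.mpr ⟨0, h0⟩
        rw [Nat.even_iff] at hT ⊢
        omega
      · simp only [if_neg h0]
        refine Finset.mem_filter.mpr ⟨Finset.mem_univ _, ?_⟩
        rw [Finset.card_insert_of_notMem h0]
        rw [Nat.even_iff] at hT ⊢
        omega
    case hj =>
      rw [Finset.mem_filter] at hT
      obtain ⟨-, hT⟩ := hT
      by_cases h0 : (0 : Fin (n + 1)) ∈ T
      · simp only [if_pos h0]
        refine Finset.mem_filter.mpr ⟨Finset.mem_univ _, ?_⟩
        rw [Finset.card_erase_of_mem h0]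
        have hpos : 0 < T.card := Finset.card_pos.mpr ⟨0, h0⟩
        rw [Nat.even_iff] at hT ⊢
        omega
      · simp only [if_neg h0]
        refine Finset.mem_filter.mpr ⟨Finset.mem_univ _, ?_⟩
        rw [Finset.card_insert_of_notMem h0]
        rw [Nat.even_iff] at hT ⊢
        omega
    case left_inv =>
      by_cases h0 : (0 : Fin (n + 1)) ∈ T
      · rw [if_pos h0, if_neg (Finset.notMem_erase 0 T), Finset.insert_erase h0]
      · rw [if_neg h0, if_pos (Finset.mem_insert_self 0 T), Finset.erase_insert h0]
    case right_inv =>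
      by_cases h0 : (0 : Fin (n + 1)) ∈ T
      · rw [if_pos h0, if_neg (Finset.notMem_erase 0 T), Finset.insert_erase h0]
      · rw [if_neg h0, if_pos (Finset.mem_insert_self 0 T), Finset.erase_insert h0]
  have total := Finset.card_filter_add_card_filter_not
    (s := (Finset.univ : Finset (Finset (Fin (n + 1)))))
    (p := fun T : Finset (Fin (n + 1)) => Even T.card)
  rw [Finset.card_univ, Fintype.card_finset, Fintype.card_fin] at total
  have hpow : (2 : ℕ) ^ (n + 1) = 2 * 2 ^ n := by ring
  omega

end Stmt9

end

/-- In type `A_n`, the total number of abelian antichains in `R⁺`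
(including the empty one) is `2^n`. -/
theorem stmt_9 (n : ℕ) :
    {A : Set (EuclideanSpace ℝ (Fin (n + 1))) | IsAbelianAntichainA n A}.ncard =
      2 ^ n := by
  rw [Stmt9.ncard_abelian_eq_ncard_good, Stmt9.ncard_good_eq_ncard_even, Stmt9.ncard_even]
end

section
/- In the root system of type C_n, the total number of abelian antichains in R⁺ (including the empty one) is 2^n. -/
noncomputable section

/-- Standard basis vector `ε_i` of `ℝ^n`. -/
def epsC (n : ℕ) (i : Fin n) : EuclideanSpace ℝ (Fin n) :=
  EuclideanSpace.single i 1

/-- The root system of type `C_n`: `±ε_i ± ε_j` (`i ≠ j`) and `±2ε_i`. -/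
def typeC (n : ℕ) : Set (EuclideanSpace ℝ (Fin n)) :=
  {v | (∃ i j : Fin n, i ≠ j ∧
          (v = epsC n i - epsC n j ∨ v = epsC n i + epsC n j ∨
            v = -(epsC n i + epsC n j))) ∨
       (∃ i : Fin n, v = (2 : ℝ) • epsC n i ∨ v = -((2 : ℝ) • epsC n i))}

/-- The positive roots of type `C_n`: `ε_i - ε_j` (`i < j`), `ε_i + ε_j` (`i < j`)
and `2ε_i`. -/
def posC (n : ℕ) : Set (EuclideanSpace ℝ (Fin n)) :=
  {v | (∃ i j : Fin n, i < j ∧ (v = epsC n i - epsC n j ∨ v = epsC n i + epsC n j)) ∨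
       (∃ i : Fin n, v = (2 : ℝ) • epsC n i)}

/-- The simple roots of type `C_n`: `α_i = ε_i - ε_{i+1}` for `i < n`, and
`α_n = 2ε_n`. -/
def simpleC (n : ℕ) (i : Fin n) : EuclideanSpace ℝ (Fin n) :=
  if h : (i : ℕ) + 1 < n then epsC n i - epsC n ⟨(i : ℕ) + 1, h⟩
  else (2 : ℝ) • epsC n i

/-- `Q⁺` for type `C_n`. -/
def QplusC (n : ℕ) : AddSubmonoid (EuclideanSpace ℝ (Fin n)) :=
  AddSubmonoid.closure (Set.range (simpleC n))

/-- The dominance order for type `C_n`. -/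
def leC (n : ℕ) (α β : EuclideanSpace ℝ (Fin n)) : Prop :=
  β - α ∈ QplusC n

/-- An antichain in the positive roots of type `C_n`. -/
def IsAntichainC (n : ℕ) (A : Set (EuclideanSpace ℝ (Fin n))) : Prop :=
  A ⊆ posC n ∧ ∀ α ∈ A, ∀ β ∈ A, α ≠ β → ¬ leC n α β

/-- The ideal `Φ(A)` generated by `A`, for type `C_n`. -/
def PhiOfC (n : ℕ) (A : Set (EuclideanSpace ℝ (Fin n))) :
    Set (EuclideanSpace ℝ (Fin n)) :=
  {α ∈ posC n | ∃ β ∈ A, leC n β α}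

/-- An abelian antichain in type `C_n`. -/
def IsAbelianAntichainC (n : ℕ) (A : Set (EuclideanSpace ℝ (Fin n))) : Prop :=
  IsAntichainC n A ∧ ∀ α ∈ PhiOfC n A, ∀ β ∈ PhiOfC n A, α + β ∉ typeC n

end


noncomputable section AuxProof

def prC (n : ℕ) (i j : Fin n) : EuclideanSpace ℝ (Fin n) := epsC n i + epsC n j

lemma epsC_apply (n : ℕ) (i j : Fin n) : epsC n i j = if j = i then 1 else 0 := by
  simp [epsC, EuclideanSpace.single_apply]

lemma sum_epsC (n : ℕ) (s : Finset (Fin n)) (i : Fin n) :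
    ∑ m ∈ s, epsC n i m = if i ∈ s then 1 else 0 := by
  simp [epsC_apply, Finset.sum_ite_eq' s i (fun _ => (1:ℝ))]

lemma key_nonneg (n : ℕ) (s : Finset (Fin n))
    (hs : ∀ a b : Fin n, a ≤ b → b ∈ s → a ∈ s) :
    ∀ v ∈ QplusC n, 0 ≤ ∑ m ∈ s, v m := by
  intro v hv
  induction hv using AddSubmonoid.closure_induction with
  | mem x hx =>
      obtain ⟨i, rfl⟩ := hx
      unfold simpleC
      split
      · next h =>
        have h1 : (i : Fin n) ≤ ⟨(i:ℕ)+1, h⟩ := by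
          simp [Fin.le_def]
        simp only [PiLp.sub_apply, Finset.sum_sub_distrib, sum_epsC]
        by_cases h2 : (⟨(i:ℕ)+1, h⟩ : Fin n) ∈ s
        · simp [h2, hs _ _ h1 h2]
        · split <;> simp [h2]
      · simp only [PiLp.smul_apply, smul_eq_mul, ← Finset.mul_sum, sum_epsC]
        split <;> norm_num
  | zero => simp
  | add x y _ _ hx hy =>
      simp only [PiLp.add_apply, Finset.sum_add_distrib]
      positivity

lemma eps_sub_mem (n : ℕ) (k i : Fin n) (h : k ≤ i) :
    epsC n k - epsC n i ∈ QplusC n := by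
  obtain ⟨d, hd⟩ : ∃ d, (i : ℕ) = (k : ℕ) + d := ⟨i - k, by omega⟩
  clear h
  induction d generalizing i with
  | zero =>
      have : i = k := by apply Fin.ext; omega
      rw [this, sub_self]
      exact zero_mem _
  | succ d ih =>
      have hd' : (k : ℕ) + d < n := by omega
      set i' : Fin n := ⟨(k : ℕ) + d, hd'⟩ with hi'
      have h1 : epsC n k - epsC n i' ∈ QplusC n := ih i' rfl
      have h2 : simpleC n i' = epsC n i' - epsC n i := by
        unfold simpleC
        have hlt : (i' : ℕ) + 1 < n := by
          have := i.isLt; simp only [hi']; omega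
        rw [dif_pos hlt]
        have : (⟨(i' : ℕ) + 1, hlt⟩ : Fin n) = i := by
          apply Fin.ext; simp only [hi']; omega
        rw [this]
      have := AddSubmonoid.add_mem _ h1 (AddSubmonoid.subset_closure ⟨i', h2⟩)
      convert this using 1
      abel
lemma two_eps_mem (n : ℕ) (j : Fin n) : epsC n j + epsC n j ∈ QplusC n := by
  have hn : 0 < n := j.pos
  set l : Fin n := ⟨n - 1, by omega⟩ with hl
  have hj : j ≤ l := by simp [Fin.le_def, hl]; omega
  have h1 : epsC n j - epsC n l ∈ QplusC n := eps_sub_mem n j l hj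
  have h2 : simpleC n l = (2:ℝ) • epsC n l := by
    unfold simpleC; rw [dif_neg]; simp [hl]; omega
  have h3 : (2:ℝ) • epsC n l ∈ QplusC n :=
    AddSubmonoid.subset_closure ⟨l, h2⟩
  have := AddSubmonoid.add_mem _ (AddSubmonoid.add_mem _ h1 h1) h3
  convert this using 1
  rw [two_smul]
  abel

lemma prC_inj {n : ℕ} {i j k l : Fin n} (hij : i ≤ j) (hkl : k ≤ l)
    (h : prC n i j = prC n k l) : i = k ∧ j = l := by
  have h' : ∀ m, epsC n i m + epsC n j m = epsC n k m + epsC n l m := by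
    intro m
    have := congrFun (congrArg (fun v : EuclideanSpace ℝ (Fin n) => (v : Fin n → ℝ)) h) m
    simpa [prC] using this
  have hik : i = k := by
    by_contra hne
    rcases lt_or_gt_of_ne hne with hlt | hlt
    · have hthis := h' i
      have hil : ¬ (i = l) := fun e => absurd hkl (e ▸ not_le.mpr hlt)
      simp only [epsC_apply, if_pos rfl, if_neg hne, if_neg hil] at hthis
      split_ifs at hthis <;> norm_num at hthis
    · have hthis := h' k
      have hki : ¬ (k = i) := fun e => (lt_irrefl i (e ▸ hlt))
      have hkj : ¬ (k = j) := fun e => absurd hij (e ▸ not_le.mpr hlt)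
      simp only [epsC_apply, if_pos rfl, if_neg hki, if_neg hkj] at hthis
      split_ifs at hthis <;> norm_num at hthis
  subst hik
  refine ⟨rfl, ?_⟩
  have h2 : epsC n j = epsC n l := by
    have : epsC n i + epsC n j = epsC n i + epsC n l := h
    exact add_left_cancel this
  have := congrFun (congrArg (fun v : EuclideanSpace ℝ (Fin n) => (v : Fin n → ℝ)) h2) j
  by_cases hh : j = l
  · exact hh
  · simp [epsC_apply, hh] at this

lemma mem_posC_iff {n : ℕ} (v : EuclideanSpace ℝ (Fin n)) :
    v ∈ posC n ↔ (∃ i j : Fin n, i < j ∧ v = epsC n i - epsC n j) ∨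
      (∃ i j : Fin n, i ≤ j ∧ v = prC n i j) := by
  constructor
  · rintro (⟨i, j, hij, h | h⟩ | ⟨i, h⟩)
    · exact Or.inl ⟨i, j, hij, h⟩
    · exact Or.inr ⟨i, j, le_of_lt hij, h⟩
    · exact Or.inr ⟨i, i, le_refl i, by rw [h, prC, two_smul]⟩
  · rintro (⟨i, j, hij, h⟩ | ⟨i, j, hij, h⟩)
    · exact Or.inl ⟨i, j, hij, Or.inl h⟩
    · rcases eq_or_lt_of_le hij with rfl | hlt
      · exact Or.inr ⟨i, by rw [h, prC, two_smul]⟩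
      · exact Or.inl ⟨i, j, hlt, Or.inr h⟩

lemma sum_coords_sub (n : ℕ) (s : Finset (Fin n)) (v w : EuclideanSpace ℝ (Fin n)) :
    ∑ m ∈ s, (v - w) m = (∑ m ∈ s, v m) - ∑ m ∈ s, w m := by
  simp [PiLp.sub_apply, Finset.sum_sub_distrib]

lemma sum_coords_prC (n : ℕ) (s : Finset (Fin n)) (i j : Fin n) :
    ∑ m ∈ s, prC n i j m =
      (if i ∈ s then (1:ℝ) else 0) + (if j ∈ s then 1 else 0) := by
  simp [prC, PiLp.add_apply, Finset.sum_add_distrib, sum_epsC]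

lemma Iic_dc (n : ℕ) (t : Fin n) :
    ∀ a b : Fin n, a ≤ b → b ∈ Finset.Iic t → a ∈ Finset.Iic t := by
  intro a b hab hb
  rw [Finset.mem_Iic] at *
  exact le_trans hab hb

lemma leC_prC_iff {n : ℕ} {i j k l : Fin n} (hij : i ≤ j) (hkl : k ≤ l) :
    leC n (prC n i j) (prC n k l) ↔ k ≤ i ∧ l ≤ j := by
  constructor
  · intro h
    have key : ∀ t : Fin n, (0:ℝ) ≤
        ((if k ≤ t then (1:ℝ) else 0) + (if l ≤ t then 1 else 0)) -
        ((if i ≤ t then (1:ℝ) else 0) + (if j ≤ t then 1 else 0)) := by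
      intro t
      have := key_nonneg n (Finset.Iic t) (Iic_dc n t) _ h
      rw [sum_coords_sub, sum_coords_prC, sum_coords_prC] at this
      simpa only [Finset.mem_Iic] using this
    have hki : k ≤ i := by
      by_contra hki
      push_neg at hki
      have := key i
      have h1 : ¬ (k ≤ i) := not_le.mpr hki
      have h2 : ¬ (l ≤ i) := not_le.mpr (lt_of_lt_of_le hki hkl)
      simp only [if_neg h1, if_neg h2, if_pos (le_refl i)] at this
      split_ifs at this <;> linarith
    refine ⟨hki, ?_⟩
    by_contra hlj
    push_neg at hlj
    have := key j
    have h2 : ¬ (l ≤ j) := not_le.mpr hlj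
    have h3 : k ≤ j := hki.trans hij
    simp only [if_neg h2, if_pos (le_refl j), if_pos h3, if_pos hij] at this
    linarith
  · rintro ⟨hki, hlj⟩
    have heq : prC n k l - prC n i j = (epsC n k - epsC n i) + (epsC n l - epsC n j) := by
      unfold prC; abel
    rw [leC, heq]
    exact add_mem (eps_sub_mem _ _ _ hki) (eps_sub_mem _ _ _ hlj)

def GoodC (n : ℕ) (S : Set (Fin n × Fin n)) : Prop :=
  (∀ p ∈ S, p.1 ≤ p.2) ∧
    ∀ p ∈ S, ∀ q ∈ S, p ≠ q → ¬(q.1 ≤ p.1 ∧ q.2 ≤ p.2)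
def vecsOfC (n : ℕ) (S : Set (Fin n × Fin n)) : Set (EuclideanSpace ℝ (Fin n)) :=
  (fun p => prC n p.1 p.2) '' S
def pairsOfC (n : ℕ) (A : Set (EuclideanSpace ℝ (Fin n))) : Set (Fin n × Fin n) :=
  {p | p.1 ≤ p.2 ∧ prC n p.1 p.2 ∈ A}

lemma leC_refl (n : ℕ) (v : EuclideanSpace ℝ (Fin n)) : leC n v v := by
  rw [leC, sub_self]; exact zero_mem _

lemma sumAll_nonneg (n : ℕ) : ∀ v ∈ QplusC n, 0 ≤ ∑ m, v m :=
  key_nonneg n Finset.univ (fun _ _ _ _ => Finset.mem_univ _)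

lemma sumAll_epsC (n : ℕ) (i : Fin n) : ∑ m, epsC n i m = 1 := by
  simp [sum_epsC]

-- abelian antichains contain no roots of the form e_i - e_j
lemma no_minus {n : ℕ} {A : Set (EuclideanSpace ℝ (Fin n))}
    (hA : IsAbelianAntichainC n A) {i j : Fin n} (hij : i < j) :
    epsC n i - epsC n j ∉ A := by
  intro hmem
  set α := epsC n i - epsC n j with hα
  set β := prC n i j with hβ
  have hαpos : α ∈ posC n := Or.inl ⟨i, j, hij, Or.inl rfl⟩
  have hβpos : β ∈ posC n := Or.inl ⟨i, j, hij, Or.inr rfl⟩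
  have hαPhi : α ∈ PhiOfC n A := ⟨hαpos, α, hmem, leC_refl n α⟩
  have hβPhi : β ∈ PhiOfC n A := by
    refine ⟨hβpos, α, hmem, ?_⟩
    have : β - α = epsC n j + epsC n j := by rw [hα, hβ, prC]; abel
    rw [leC, this]
    exact two_eps_mem n j
  have habel := hA.2 α hαPhi β hβPhi
  apply habel
  right
  refine ⟨i, Or.inl ?_⟩
  rw [hα, hβ, prC, two_smul]
  abel

lemma Phi_plus {n : ℕ} {A : Set (EuclideanSpace ℝ (Fin n))}
    (hA : ∀ v ∈ A, ∃ i j : Fin n, i ≤ j ∧ v = prC n i j) :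
    ∀ γ ∈ PhiOfC n A, ∃ k l : Fin n, k ≤ l ∧ γ = prC n k l := by
  rintro γ ⟨hγpos, β, hβA, hβγ⟩
  obtain ⟨i, j, hij, rfl⟩ := hA β hβA
  rcases (mem_posC_iff γ).mp hγpos with ⟨k, l, hkl, rfl⟩ | h
  · exfalso
    have h0 := sumAll_nonneg n _ hβγ
    have h1 : ∑ m, (epsC n k - epsC n l - prC n i j) m = -2 := by
      simp [PiLp.sub_apply, prC, PiLp.add_apply, Finset.sum_sub_distrib,
        Finset.sum_add_distrib, sumAll_epsC]
      norm_num
    rw [h1] at h0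
    linarith
  · exact h

lemma sum_prC_not_typeC {n : ℕ} (i j k l : Fin n) :
    prC n i j + prC n k l ∉ typeC n := by
  intro h
  have hsum : ∑ m, (prC n i j + prC n k l) m = 4 := by
    simp [prC, PiLp.add_apply, Finset.sum_add_distrib, sumAll_epsC]
    norm_num
  have : ∑ m, (prC n i j + prC n k l) m ≤ 2 := by
    rcases h with ⟨a, b, hab, h | h | h⟩ | ⟨a, h | h⟩ <;> rw [h] <;>
      simp [PiLp.sub_apply, PiLp.add_apply, PiLp.neg_apply, PiLp.smul_apply,
        Finset.sum_sub_distrib, Finset.sum_add_distrib, Finset.sum_neg_distrib,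
        sumAll_epsC, ← Finset.mul_sum] <;> norm_num
  linarith

lemma abelian_of_good {n : ℕ} {S : Set (Fin n × Fin n)} (hS : GoodC n S) :
    IsAbelianAntichainC n (vecsOfC n S) := by
  have hmem : ∀ v ∈ vecsOfC n S, ∃ i j : Fin n, i ≤ j ∧ v = prC n i j := by
    rintro v ⟨p, hp, rfl⟩
    exact ⟨p.1, p.2, hS.1 p hp, rfl⟩
  constructor
  · constructor
    · rintro v ⟨p, hp, rfl⟩
      exact (mem_posC_iff _).mpr (Or.inr ⟨p.1, p.2, hS.1 p hp, rfl⟩)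
    · rintro α ⟨p, hp, rfl⟩ β ⟨q, hq, rfl⟩ hne hle
      have hpq : p ≠ q := by rintro rfl; exact hne rfl
      rw [leC_prC_iff (hS.1 p hp) (hS.1 q hq)] at hle
      exact hS.2 p hp q hq hpq hle
  · intro α hα β hβ
    obtain ⟨i, j, hij, rfl⟩ := Phi_plus hmem α hα
    obtain ⟨k, l, hkl, rfl⟩ := Phi_plus hmem β hβ
    exact sum_prC_not_typeC i j k l

lemma good_of_abelian {n : ℕ} {A : Set (EuclideanSpace ℝ (Fin n))}
    (hA : IsAbelianAntichainC n A) :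
    GoodC n (pairsOfC n A) ∧ A = vecsOfC n (pairsOfC n A) := by
  have hmem : ∀ v ∈ A, ∃ i j : Fin n, i ≤ j ∧ v = prC n i j := by
    intro v hv
    rcases (mem_posC_iff v).mp (hA.1.1 hv) with ⟨i, j, hij, rfl⟩ | h
    · exact absurd hv (no_minus hA hij)
    · exact h
  have hAeq : A = vecsOfC n (pairsOfC n A) := by
    apply Set.eq_of_subset_of_subset
    · intro v hv
      obtain ⟨i, j, hij, rfl⟩ := hmem v hv
      exact ⟨(i, j), ⟨hij, hv⟩, rfl⟩
    · rintro v ⟨p, ⟨hp1, hp2⟩, rfl⟩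
      exact hp2
  refine ⟨⟨fun p hp => hp.1, ?_⟩, hAeq⟩
  rintro p hp q hq hpq hle
  have hvne : prC n p.1 p.2 ≠ prC n q.1 q.2 := by
    intro h
    obtain ⟨h1, h2⟩ := prC_inj hp.1 hq.1 h
    exact hpq (Prod.ext h1 h2)
  exact hA.1.2 _ hp.2 _ hq.2 hvne ((leC_prC_iff hp.1 hq.1).mpr hle)

lemma pairsOf_vecsOf {n : ℕ} {S : Set (Fin n × Fin n)} (hS : ∀ p ∈ S, p.1 ≤ p.2) :
    pairsOfC n (vecsOfC n S) = S := by
  ext p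
  constructor
  · rintro ⟨hp1, q, hq, heq⟩
    obtain ⟨h1, h2⟩ := prC_inj (hS q hq) hp1 heq
    have : p = q := Prod.ext h1.symm h2.symm
    rwa [this]
  · intro hp
    exact ⟨hS p hp, p, hp, rfl⟩

open Classical in
def elemsOf (n : ℕ) (S : Set (Fin n × Fin n)) : Finset (Fin n) :=
  Finset.univ.filter (fun x => ∃ p ∈ S, p.1 = x ∨ p.2 = x)

def sigC (n : ℕ) (T : Finset (Fin n)) : Fin T.card ↪o Fin n :=
  T.orderEmbOfFin rfl

def gsetOf (n : ℕ) (T : Finset (Fin n)) : Set (Fin n × Fin n) :=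
  {p | ∃ a : Fin T.card, a ≤ a.rev ∧ p = (sigC n T a, sigC n T a.rev)}

lemma mem_elemsOf {n : ℕ} {S : Set (Fin n × Fin n)} {x : Fin n} :
    x ∈ elemsOf n S ↔ ∃ p ∈ S, p.1 = x ∨ p.2 = x := by
  simp [elemsOf]

lemma sigC_mem (n : ℕ) (T : Finset (Fin n)) (a : Fin T.card) : sigC n T a ∈ T :=
  T.orderEmbOfFin_mem rfl a

lemma sigC_surj {n : ℕ} {T : Finset (Fin n)} {x : Fin n} (hx : x ∈ T) :
    ∃ a, sigC n T a = x := by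
  have : x ∈ Set.range (T.orderEmbOfFin rfl) := by
    rw [Finset.range_orderEmbOfFin]; exact_mod_cast hx
  exact this

lemma rank_lt {n : ℕ} (T : Finset (Fin n)) (p : Fin T.card) :
    (T.filter (· < sigC n T p)).card = (p : ℕ) := by
  classical
  have himg : T.filter (· < sigC n T p) = Finset.image (sigC n T) (Finset.Iio p) := by
    ext x
    simp only [Finset.mem_filter, Finset.mem_image, Finset.mem_Iio]
    constructor
    · rintro ⟨hxT, hlt⟩
      obtain ⟨a, rfl⟩ := sigC_surj hxT
      exact ⟨a, (sigC n T).strictMono.lt_iff_lt.mp hlt, rfl⟩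
    · rintro ⟨a, ha, rfl⟩
      exact ⟨sigC_mem n T a, (sigC n T).strictMono ha⟩
  rw [himg, Finset.card_image_of_injective _ (sigC n T).injective, Fin.card_Iio]

lemma rank_gt {n : ℕ} (T : Finset (Fin n)) (p : Fin T.card) :
    (T.filter (sigC n T p < ·)).card = T.card - 1 - (p : ℕ) := by
  classical
  have himg : T.filter (sigC n T p < ·) = Finset.image (sigC n T) (Finset.Ioi p) := by
    ext x
    simp only [Finset.mem_filter, Finset.mem_image, Finset.mem_Ioi]
    constructor
    · rintro ⟨hxT, hlt⟩
      obtain ⟨a, rfl⟩ := sigC_surj hxT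
      exact ⟨a, (sigC n T).strictMono.lt_iff_lt.mp hlt, rfl⟩
    · rintro ⟨a, ha, rfl⟩
      exact ⟨sigC_mem n T a, (sigC n T).strictMono ha⟩
  rw [himg, Finset.card_image_of_injective _ (sigC n T).injective, Fin.card_Ioi]

-- first/second components are injective on a good set
lemma fst_injOn {n : ℕ} {S : Set (Fin n × Fin n)} (hS : GoodC n S) :
    Set.InjOn Prod.fst S := by
  intro p hp q hq h
  by_contra hne
  have h1 := hS.2 p hp q hq hne
  have h2 := hS.2 q hq p hp (fun e => hne e.symm)
  rcases le_total p.2 q.2 with hle | hle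
  · exact h2 ⟨h.le, hle⟩
  · exact h1 ⟨h.ge, hle⟩

lemma snd_injOn {n : ℕ} {S : Set (Fin n × Fin n)} (hS : GoodC n S) :
    Set.InjOn Prod.snd S := by
  intro p hp q hq h
  by_contra hne
  have h1 := hS.2 p hp q hq hne
  have h2 := hS.2 q hq p hp (fun e => hne e.symm)
  rcases le_total p.1 q.1 with hle | hle
  · exact h2 ⟨hle, h.le⟩
  · exact h1 ⟨hle, h.ge⟩

lemma card_lt_eq_card_gt {n : ℕ} {S : Set (Fin n × Fin n)} (hS : GoodC n S)
    {a b : Fin n} (hab : (a, b) ∈ S) :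
    ((elemsOf n S).filter (· < a)).card = ((elemsOf n S).filter (b < ·)).card := by
  classical
  set L : Set (Fin n × Fin n) := {p ∈ S | p.1 < a ∧ b < p.2} with hL
  have hab' : a ≤ b := hS.1 (a, b) hab
  have hfst : Prod.fst '' L = ↑((elemsOf n S).filter (· < a)) := by
    ext x
    simp only [Set.mem_image, Finset.coe_filter, Set.mem_setOf_eq, mem_elemsOf]
    constructor
    · rintro ⟨p, ⟨hpS, hp1, hp2⟩, rfl⟩
      exact ⟨⟨p, hpS, Or.inl rfl⟩, hp1⟩
    · rintro ⟨⟨p, hpS, hc⟩, hxa⟩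
      rcases hc with hc | hc
      · subst hc
        have hne : p ≠ (a, b) := by
          intro e; rw [e] at hxa; exact lt_irrefl a hxa
        have := hS.2 (a, b) hab p hpS (fun e => hne e.symm)
        push_neg at this
        exact ⟨p, ⟨hpS, hxa, this hxa.le⟩, rfl⟩
      · exfalso
        subst hc
        have hne : p ≠ (a, b) := by
          intro e
          rw [e] at hxa
          exact absurd hab' (not_le.mpr hxa)
        have := hS.2 (a, b) hab p hpS (fun e => hne e.symm)
        exact this ⟨(hS.1 p hpS).trans hxa.le, hxa.le.trans hab'⟩
  have hsnd : Prod.snd '' L = ↑((elemsOf n S).filter (b < ·)) := by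
    ext x
    simp only [Set.mem_image, Finset.coe_filter, Set.mem_setOf_eq, mem_elemsOf]
    constructor
    · rintro ⟨p, ⟨hpS, hp1, hp2⟩, rfl⟩
      exact ⟨⟨p, hpS, Or.inr rfl⟩, hp2⟩
    · rintro ⟨⟨p, hpS, hc⟩, hbx⟩
      rcases hc with hc | hc
      · exfalso
        subst hc
        have hne : p ≠ (a, b) := by
          intro e
          rw [e] at hbx
          exact absurd hab' (not_le.mpr hbx)
        have := hS.2 p hpS (a, b) hab hne
        exact this ⟨hab'.trans hbx.le, hbx.le.trans (hS.1 p hpS)⟩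
      · subst hc
        have hne : p ≠ (a, b) := by
          intro e; rw [e] at hbx; exact lt_irrefl b hbx
        have := hS.2 p hpS (a, b) hab hne
        push_neg at this
        exact ⟨p, ⟨hpS, not_le.mp (fun h => (show p.2 < b from this h).not_gt hbx), hbx⟩, rfl⟩
  have hLsub : L ⊆ S := fun p hp => hp.1
  have hfin : L.Finite := Set.toFinite L
  have c1 : (Prod.fst '' L).ncard = L.ncard :=
    Set.ncard_image_of_injOn ((fst_injOn hS).mono hLsub)
  have c2 : (Prod.snd '' L).ncard = L.ncard :=
    Set.ncard_image_of_injOn ((snd_injOn hS).mono hLsub)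
  have := c1.trans c2.symm
  rw [hfst, hsnd, Set.ncard_coe_finset, Set.ncard_coe_finset] at this
  exact this

lemma pair_structure {n : ℕ} {S : Set (Fin n × Fin n)} (hS : GoodC n S)
    {a b : Fin n} (hab : (a, b) ∈ S) :
    ∃ p : Fin (elemsOf n S).card, p ≤ p.rev ∧
      a = sigC n (elemsOf n S) p ∧ b = sigC n (elemsOf n S) p.rev := by
  classical
  set T := elemsOf n S with hT
  have haT : a ∈ T := mem_elemsOf.mpr ⟨(a, b), hab, Or.inl rfl⟩
  have hbT : b ∈ T := mem_elemsOf.mpr ⟨(a, b), hab, Or.inr rfl⟩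
  obtain ⟨p, hp⟩ := sigC_surj haT
  obtain ⟨q, hq⟩ := sigC_surj hbT
  have hr1 : (T.filter (· < a)).card = (p : ℕ) := by rw [← hp]; exact rank_lt T p
  have hr2 : (T.filter (b < ·)).card = T.card - 1 - (q : ℕ) := by
    rw [← hq]; exact rank_gt T q
  have heq := card_lt_eq_card_gt hS hab
  rw [hr1, hr2] at heq
  have hqrev : q = p.rev := by
    apply Fin.ext
    rw [Fin.val_rev]
    omega
  have hprev : p.rev = q := hqrev.symm
  have hab' : a ≤ b := hS.1 (a, b) hab
  have hpq : p ≤ q := by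
    rw [← hp, ← hq] at hab'
    exact (sigC n T).le_iff_le.mp hab'
  exact ⟨p, hqrev ▸ hpq, hp.symm, by rw [hprev, hq]⟩

lemma gset_elems_eq {n : ℕ} {S : Set (Fin n × Fin n)} (hS : GoodC n S) :
    gsetOf n (elemsOf n S) = S := by
  apply Set.eq_of_subset_of_subset
  · rintro x ⟨c, hc, rfl⟩
    obtain ⟨p, hpS, hcomp⟩ := mem_elemsOf.mp (sigC_mem n (elemsOf n S) c)
    obtain ⟨d, hd, h1, h2⟩ := pair_structure hS (show (p.1, p.2) ∈ S from hpS)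
    rcases hcomp with hc1 | hc2
    · have hdc : d = c := (sigC n (elemsOf n S)).injective (by rw [← h1, hc1])
      have heq : (sigC n (elemsOf n S) c, sigC n (elemsOf n S) c.rev) = (p.1, p.2) := by
        rw [h1, h2, hdc]
      rw [heq]
      simpa using hpS
    · have hdc : d.rev = c := (sigC n (elemsOf n S)).injective (by rw [← h2, hc2])
      have hd' : d = c.rev := by rw [← hdc, Fin.rev_rev]
      have hcc : c.rev ≤ c := by rw [← hd', ← hdc]; exact hd
      have hceq : c = c.rev := le_antisymm hc hcc
      have e1 : p.1 = sigC n (elemsOf n S) c := by rw [h1, hd', ← hceq]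
      have e2 : p.2 = sigC n (elemsOf n S) c.rev := by rw [h2, hd', Fin.rev_rev, ← hceq]
      have heq : (sigC n (elemsOf n S) c, sigC n (elemsOf n S) c.rev) = (p.1, p.2) := by
        rw [e1, e2]
      rw [heq]
      simpa using hpS
  · intro x hx
    obtain ⟨p, hp, h1, h2⟩ := pair_structure hS (show (x.1, x.2) ∈ S from hx)
    exact ⟨p, hp, by rw [← h1, ← h2]⟩

lemma good_gset (n : ℕ) (T : Finset (Fin n)) : GoodC n (gsetOf n T) := by
  constructor
  · rintro p ⟨a, ha, rfl⟩
    exact (sigC n T).le_iff_le.mpr ha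
  · rintro p ⟨a, ha, rfl⟩ q ⟨b, hb, rfl⟩ hne ⟨h1, h2⟩
    have hne' : a ≠ b := by rintro rfl; exact hne rfl
    rcases lt_or_gt_of_ne hne' with h | h
    · exact absurd h1 (not_le.mpr ((sigC n T).strictMono h))
    · have : a.rev < b.rev := Fin.rev_lt_rev.mpr h
      exact absurd h2 (not_le.mpr ((sigC n T).strictMono this))

lemma elems_gset_eq (n : ℕ) (T : Finset (Fin n)) : elemsOf n (gsetOf n T) = T := by
  ext x
  rw [mem_elemsOf]
  constructor
  · rintro ⟨p, ⟨a, ha, rfl⟩, hc | hc⟩ <;> rw [← hc] <;> exact sigC_mem n T _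
  · intro hx
    obtain ⟨a, rfl⟩ := sigC_surj hx
    rcases le_total a a.rev with h | h
    · exact ⟨(sigC n T a, sigC n T a.rev), ⟨a, h, rfl⟩, Or.inl rfl⟩
    · refine ⟨(sigC n T a.rev, sigC n T a), ⟨a.rev, ?_, by rw [Fin.rev_rev]⟩, Or.inr rfl⟩
      simpa [Fin.rev_rev] using h


def equivGoodFinset (n : ℕ) : {S : Set (Fin n × Fin n) // GoodC n S} ≃ Finset (Fin n) where
  toFun S := elemsOf n S.1
  invFun T := ⟨gsetOf n T, good_gset n T⟩
  left_inv S := Subtype.ext (gset_elems_eq S.2)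
  right_inv T := elems_gset_eq n T

def equivAbelianGood (n : ℕ) :
    {A : Set (EuclideanSpace ℝ (Fin n)) // IsAbelianAntichainC n A} ≃
      {S : Set (Fin n × Fin n) // GoodC n S} where
  toFun A := ⟨pairsOfC n A.1, (good_of_abelian A.2).1⟩
  invFun S := ⟨vecsOfC n S.1, abelian_of_good S.2⟩
  left_inv A := Subtype.ext (good_of_abelian A.2).2.symm
  right_inv S := Subtype.ext (pairsOf_vecsOf S.2.1)

end AuxProof

/-- In type `C_n`, the total number of abelian antichains in `R⁺`
(including the empty one) is `2^n`. -/
theorem stmt_10 (n : ℕ) :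
    {A : Set (EuclideanSpace ℝ (Fin n)) | IsAbelianAntichainC n A}.ncard =
      2 ^ n := by
  rw [← Nat.card_coe_set_eq]
  have e : ↥{A : Set (EuclideanSpace ℝ (Fin n)) | IsAbelianAntichainC n A} ≃ Finset (Fin n) :=
    (Equiv.subtypeEquivRight (fun A => Iff.rfl)).trans
      ((equivAbelianGood n).trans (equivGoodFinset n))
  rw [Nat.card_congr e]
  rw [Nat.card_eq_fintype_card, Fintype.card_finset, Fintype.card_fin]
end

section
/- Let R be an irreducible root system and let α, β ∈ R with β a long root and (α, β) = 0. Then there exist γ, γ' ∈ R with γ ∉ {α, β} such that α + β = γ + γ'. -/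
open RealInnerProductSpace

structure RootSys (n : ℕ) where
  R : Set (EuclideanSpace ℝ (Fin n))
  finite : R.Finite
  zero_not_mem : (0 : EuclideanSpace ℝ (Fin n)) ∉ R
  spans : Submodule.span ℝ R = ⊤
  neg_mem : ∀ α ∈ R, -α ∈ R
  reduced : ∀ α ∈ R, ∀ t : ℝ, t • α ∈ R → t = 1 ∨ t = -1
  reflect_mem : ∀ α ∈ R, ∀ β ∈ R, β - (2 * ⟪α, β⟫ / ⟪α, α⟫) • α ∈ R
  crystal : ∀ α ∈ R, ∀ β ∈ R, ∃ k : ℤ, 2 * ⟪α, β⟫ / ⟪α, α⟫ = (k : ℝ)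
  irreducible : ∀ S ⊆ R, (∀ α ∈ S, ∀ β ∈ R \ S, ⟪α, β⟫ = 0) → S = ∅ ∨ S = R

namespace RootSysAux

variable {n : ℕ}

/-- Roots are nonzero. -/
lemma mem_ne_zero (RS : RootSys n) {x : EuclideanSpace ℝ (Fin n)} (hx : x ∈ RS.R) :
    x ≠ 0 := fun h => RS.zero_not_mem (h ▸ hx)

lemma inner_self_pos (RS : RootSys n) {x : EuclideanSpace ℝ (Fin n)} (hx : x ∈ RS.R) :
    0 < ⟪x, x⟫ := by
  rw [real_inner_self_eq_norm_sq]
  exact pow_pos (norm_pos_iff.mpr (mem_ne_zero RS hx)) 2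

/-- Strict Cauchy-Schwarz for non-proportional vectors. -/
lemma strict_cs_aux {x y : EuclideanSpace ℝ (Fin n)} (hy : y ≠ 0)
    (h : ∀ t : ℝ, x ≠ t • y) : ⟪x, y⟫ ^ 2 < ⟪x, x⟫ * ⟪y, y⟫ := by
  have hy' : (0:ℝ) < ‖y‖ := norm_pos_iff.mpr hy
  have h1 : ⟪x, y⟫ < ‖x‖ * ‖y‖ := by
    apply inner_lt_norm_mul_iff_real.mpr
    intro heq
    refine h (‖x‖ / ‖y‖) ?_
    rw [div_eq_inv_mul, ← smul_smul, ← heq, smul_smul,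
      inv_mul_cancel₀ (ne_of_gt hy'), one_smul]
  have h2 : ⟪-x, y⟫ < ‖-x‖ * ‖y‖ := by
    apply inner_lt_norm_mul_iff_real.mpr
    intro heq
    rw [norm_neg] at heq
    refine h (-(‖x‖ / ‖y‖)) ?_
    have hnx : -x = (‖x‖ / ‖y‖) • y := by
      rw [div_eq_inv_mul, ← smul_smul, ← heq, smul_smul,
        inv_mul_cancel₀ (ne_of_gt hy'), one_smul]
    rw [neg_smul, ← hnx, neg_neg]
  rw [inner_neg_left, norm_neg] at h2
  have hsq : ⟪x, y⟫ ^ 2 < (‖x‖ * ‖y‖) ^ 2 := sq_lt_sq' (by linarith) h1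
  calc ⟪x, y⟫ ^ 2 < (‖x‖ * ‖y‖) ^ 2 := hsq
    _ = ⟪x, x⟫ * ⟪y, y⟫ := by
        rw [real_inner_self_eq_norm_sq, real_inner_self_eq_norm_sq]; ring

/-- Strict Cauchy-Schwarz for distinct, non-opposite roots. -/
lemma strict_cs (RS : RootSys n) {x y : EuclideanSpace ℝ (Fin n)}
    (hx : x ∈ RS.R) (hy : y ∈ RS.R) (h1 : x ≠ y) (h2 : x ≠ -y) :
    ⟪x, y⟫ ^ 2 < ⟪x, x⟫ * ⟪y, y⟫ := by
  apply strict_cs_aux (mem_ne_zero RS hy)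
  intro t ht
  rcases RS.reduced y hy t (ht ▸ hx) with h | h
  · exact h1 (by rw [ht, h, one_smul])
  · exact h2 (by rw [ht, h, neg_one_smul])

/-- If two distinct roots have positive inner product, their difference is a root. -/
lemma sub_mem (RS : RootSys n) {x y : EuclideanSpace ℝ (Fin n)}
    (hx : x ∈ RS.R) (hy : y ∈ RS.R) (hpos : 0 < ⟪x, y⟫) (hne : x ≠ y) :
    x - y ∈ RS.R := by
  have hxx := inner_self_pos RS hx
  have hyy := inner_self_pos RS hy
  have hne' : x ≠ -y := by
    intro h
    rw [h, inner_neg_left] at hpos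
    linarith
  have hcs := strict_cs RS hx hy hne hne'
  obtain ⟨a, ha⟩ := RS.crystal x hx y hy
  obtain ⟨b, hb⟩ := RS.crystal y hy x hx
  rw [real_inner_comm x y] at hb
  have ha' : (a : ℝ) * ⟪x, x⟫ = 2 * ⟪x, y⟫ := by
    rw [← ha, div_mul_cancel₀ _ (ne_of_gt hxx)]
  have hb' : (b : ℝ) * ⟪y, y⟫ = 2 * ⟪x, y⟫ := by
    rw [← hb, div_mul_cancel₀ _ (ne_of_gt hyy)]
  have hapos : (0:ℝ) < a := by
    have := mul_pos (by linarith : (0:ℝ) < 2 * ⟪x, y⟫) hxx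
    nlinarith
  have hbpos : (0:ℝ) < b := by nlinarith
  have ha1 : 1 ≤ a := by exact_mod_cast hapos
  have hb1 : 1 ≤ b := by exact_mod_cast hbpos
  have hablt : ((a * b : ℤ) : ℝ) < 4 := by
    push_cast
    nlinarith [mul_pos hxx hyy]
  have hab : a * b < 4 := by exact_mod_cast hablt
  have hcase : a = 1 ∨ b = 1 := by
    by_contra hc
    push_neg at hc
    have : 2 ≤ a := by omega
    have : 2 ≤ b := by omega
    nlinarith
  rcases hcase with h | h
  · have hmem := RS.reflect_mem x hx y hy
    rw [ha, h] at hmem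
    simp only [Int.cast_one, one_smul] at hmem
    have := RS.neg_mem _ hmem
    rwa [neg_sub] at this
  · have hmem := RS.reflect_mem y hy x hx
    rw [real_inner_comm x y, hb, h] at hmem
    simpa only [Int.cast_one, one_smul] using hmem

/-- There is a root non-orthogonal to both α and β. -/
lemma exists_nonorth (RS : RootSys n) {α β : EuclideanSpace ℝ (Fin n)}
    (hα : α ∈ RS.R) (hβ : β ∈ RS.R) (horth : ⟪α, β⟫ = 0) :
    ∃ η ∈ RS.R, ⟪η, α⟫ ≠ 0 ∧ ⟪η, β⟫ ≠ 0 := by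
  set rel : EuclideanSpace ℝ (Fin n) → EuclideanSpace ℝ (Fin n) → Prop :=
    fun x y => y ∈ RS.R ∧ ⟪x, y⟫ ≠ 0 with hrel
  -- connectivity
  have hconn : Relation.ReflTransGen rel α β := by
    set S : Set (EuclideanSpace ℝ (Fin n)) :=
      {γ | γ ∈ RS.R ∧ Relation.ReflTransGen rel α γ} with hSdef
    have hsub : S ⊆ RS.R := fun x hx => hx.1
    have hortho : ∀ s ∈ S, ∀ t ∈ RS.R \ S, ⟪s, t⟫ = 0 := by
      intro s hs t ht
      by_contra hst
      exact ht.2 ⟨ht.1, hs.2.tail ⟨ht.1, hst⟩⟩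
    have hαS : α ∈ S := ⟨hα, Relation.ReflTransGen.refl⟩
    rcases RS.irreducible S hsub hortho with h | h
    · rw [h] at hαS; exact absurd hαS (Set.notMem_empty α)
    · have hβS : β ∈ S := by rw [h]; exact hβ
      exact hβS.2
  -- main induction along the chain
  have key : ∀ δ, Relation.ReflTransGen rel α δ →
      ∀ γ ∈ RS.R, ⟪γ, δ⟫ ≠ 0 → ⟪γ, β⟫ ≠ 0 →
      ∃ η ∈ RS.R, ⟪η, α⟫ ≠ 0 ∧ ⟪η, β⟫ ≠ 0 := by
    intro δ hchain
    induction hchain with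
    | refl => intro γ hγ h1 h2; exact ⟨γ, hγ, h1, h2⟩
    | @tail b c hab hbc ih =>
      intro γ hγ h1 h2
      by_cases hcβ : ⟪c, β⟫ = 0
      · -- reduce to the positive inner product case
        suffices H : ∀ γ ∈ RS.R, 0 < ⟪γ, c⟫ → ⟪γ, β⟫ ≠ 0 →
            ∃ η ∈ RS.R, ⟪η, α⟫ ≠ 0 ∧ ⟪η, β⟫ ≠ 0 by
          rcases h1.lt_or_gt with hneg | hpos
          · refine H (-γ) (RS.neg_mem γ hγ) ?_ ?_
            · rw [inner_neg_left]; linarith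
            · rw [inner_neg_left]; simpa using h2
          · exact H γ hγ hpos h2
        intro γ hγ hpos hγβ
        have hne : γ ≠ c := fun h => hγβ (by rw [h]; exact hcβ)
        have hsub : γ - c ∈ RS.R := sub_mem RS hγ hbc.1 hpos hne
        by_cases hd : ⟪γ - c, b⟫ = 0
        · apply ih γ hγ ?_ hγβ
          rw [inner_sub_left, sub_eq_zero] at hd
          rw [hd]
          rw [real_inner_comm]
          exact hbc.2
        · apply ih (γ - c) hsub hd ?_
          rw [inner_sub_left, hcβ, sub_zero]
          exact hγβ
      · exact ih c hbc.1 (by rw [real_inner_comm]; exact hbc.2) hcβ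
  exact key β hconn β hβ (ne_of_gt (inner_self_pos RS hβ)) (ne_of_gt (inner_self_pos RS hβ))

/-- For a long root β and a root γ ≠ ±β, the Cartan integer 2(β,γ)/(β,β) is -1, 0 or 1. -/
lemma long_cartan (RS : RootSys n) {β γ : EuclideanSpace ℝ (Fin n)}
    (hβ : β ∈ RS.R) (hγ : γ ∈ RS.R)
    (hlong : ∀ δ ∈ RS.R, ‖δ‖ ≤ ‖β‖)
    (h1 : γ ≠ β) (h2 : γ ≠ -β) :
    2 * ⟪β, γ⟫ / ⟪β, β⟫ = 1 ∨ 2 * ⟪β, γ⟫ / ⟪β, β⟫ = -1 ∨ ⟪β, γ⟫ = 0 := by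
  have hββ := inner_self_pos RS hβ
  have hcs := strict_cs RS hγ hβ h1 h2
  have hlen : ⟪γ, γ⟫ ≤ ⟪β, β⟫ := by
    rw [real_inner_self_eq_norm_sq, real_inner_self_eq_norm_sq]
    exact pow_le_pow_left₀ (norm_nonneg γ) (hlong γ hγ) 2
  obtain ⟨k, hk⟩ := RS.crystal β hβ γ hγ
  have hk' : (k : ℝ) * ⟪β, β⟫ = 2 * ⟪β, γ⟫ := by
    rw [← hk, div_mul_cancel₀ _ (ne_of_gt hββ)]
  have hβγ : ⟪γ, β⟫ = ⟪β, γ⟫ := real_inner_comm β γ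
  have e1 : (k : ℝ) ^ 2 * (⟪β, β⟫ * ⟪β, β⟫) = (2 * ⟪β, γ⟫) * (2 * ⟪β, γ⟫) := by
    rw [← hk']; ring
  have e2 : ⟪β, γ⟫ ^ 2 < ⟪β, β⟫ * ⟪β, β⟫ := by
    rw [← hβγ]
    calc ⟪γ, β⟫ ^ 2 < ⟪γ, γ⟫ * ⟪β, β⟫ := hcs
      _ ≤ ⟪β, β⟫ * ⟪β, β⟫ := mul_le_mul_of_nonneg_right hlen hββ.le
  have hksq : ((k ^ 2 : ℤ) : ℝ) < 4 := by
    push_cast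
    nlinarith [mul_pos hββ hββ]
  have hksq' : k ^ 2 < 4 := by exact_mod_cast hksq
  have hkval : k = -1 ∨ k = 0 ∨ k = 1 := by
    have h2 : -2 < k := by nlinarith
    have h3 : k < 2 := by nlinarith
    omega
  rcases hkval with h | h | h
  · right; left; rw [hk, h]; norm_num
  · right; right
    rw [h] at hk'
    push_cast at hk'
    linarith
  · left; rw [hk, h]; norm_num

end RootSysAux

/-- If `α, β ∈ R` with `β` a long root and `(α, β) = 0`, then `α + β = γ + γ'`
for some roots `γ, γ'` with `γ ∉ {α, β}`. -/
theorem stmt_13 {n : ℕ} (RS : RootSys n) (α β : EuclideanSpace ℝ (Fin n))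
    (hα : α ∈ RS.R) (hβ : β ∈ RS.R)
    (hlong : ∀ δ ∈ RS.R, ‖δ‖ ≤ ‖β‖)
    (horth : ⟪α, β⟫ = 0) :
    ∃ γ ∈ RS.R, ∃ γ' ∈ RS.R, γ ≠ α ∧ γ ≠ β ∧ α + β = γ + γ' := by
  classical
  open RootSysAux in
  have hββ : 0 < ⟪β, β⟫ := inner_self_pos RS hβ
  have hβα : ⟪β, α⟫ = 0 := by rw [real_inner_comm]; exact horth
  -- Step 1: a root non-orthogonal to both α and β
  obtain ⟨η₀, hη₀, hη₀α, hη₀β⟩ := exists_nonorth RS hα hβ horth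
  -- Step 2: arrange positive inner product with α
  obtain ⟨η, hη, hηα, hηβ⟩ :
      ∃ η ∈ RS.R, 0 < ⟪η, α⟫ ∧ ⟪η, β⟫ ≠ 0 := by
    rcases hη₀α.lt_or_gt with hneg | hpos
    · refine ⟨-η₀, RS.neg_mem η₀ hη₀, ?_, ?_⟩
      · rw [inner_neg_left]; linarith
      · rw [inner_neg_left]; simpa using hη₀β
    · exact ⟨η₀, hη₀, hpos, hη₀β⟩
  -- Step 3: arrange Cartan integer 2(β,γ)/(β,β) = 1
  have hηnb : η ≠ β := by
    intro h; rw [h, hβα] at hηα; exact lt_irrefl _ hηα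
  have hηnnb : η ≠ -β := by
    intro h
    rw [h, inner_neg_left, hβα, neg_zero] at hηα
    exact lt_irrefl _ hηα
  obtain ⟨γ, hγ, hγα, hγc⟩ :
      ∃ γ ∈ RS.R, 0 < ⟪γ, α⟫ ∧ 2 * ⟪β, γ⟫ / ⟪β, β⟫ = 1 := by
    rcases long_cartan RS hβ hη hlong hηnb hηnnb with h | h | h
    · exact ⟨η, hη, hηα, h⟩
    · have hmem := RS.reflect_mem β hβ η hη
      rw [h] at hmem
      rw [neg_one_smul, sub_neg_eq_add] at hmem
      refine ⟨η + β, hmem, ?_, ?_⟩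
      · rw [inner_add_left, hβα, add_zero]; exact hηα
      · rw [div_eq_iff (ne_of_gt hββ)] at h
        rw [inner_add_right, div_eq_one_iff_eq (ne_of_gt hββ)]
        linarith
    · exact absurd (by rw [real_inner_comm]; exact h) hηβ
  have hβγ1 : ⟪β, γ⟫ = ⟪β, β⟫ / 2 := by
    rw [div_eq_one_iff_eq (ne_of_gt hββ)] at hγc
    linarith
  -- Step 4: γ - β is a root
  have hy : γ - β ∈ RS.R := by
    have hmem := RS.reflect_mem β hβ γ hγ
    rwa [hγc, one_smul] at hmem
  -- Step 5: α - (γ - β) is a root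
  have h5 : 0 < ⟪α, γ - β⟫ := by
    rw [inner_sub_right, horth, sub_zero, real_inner_comm]
    exact hγα
  have hne : α ≠ γ - β := by
    intro h
    have hγeq : γ = α + β := by rw [h]; abel
    rw [hγeq, inner_add_right, hβα, zero_add] at hβγ1
    linarith
  have hsub : α - (γ - β) ∈ RS.R := sub_mem RS hα hy h5 hne
  refine ⟨γ, hγ, α - (γ - β), hsub, ?_, ?_, by abel⟩
  · intro h
    rw [h, hβα] at hβγ1
    linarith
  · intro h
    rw [h, hβα] at hγα
    exact lt_irrefl _ hγα
end

section
/- Let R be an irreducible root system and S ⊆ R a set of long roots such that α + β ∉ R for all α, β ∈ S and (γ + R) ∩ (S + S) = ∅ for all γ ∈ R \ S. For α ∈ S set α^⊥ = {γ ∈ S : (α, γ) = 0}. Then #α^⊥ = #β^⊥ for all α, β ∈ S. -/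
open RealInnerProductSpace

/-- equality from inner product 2 with a long root dominating in norm -/
lemma rs_eq_of_inner_two {n : ℕ} {α γ : EuclideanSpace ℝ (Fin n)}
    (hαα : ⟪α, α⟫ = 2) (hγ : ‖γ‖ ≤ ‖α‖) (h : ⟪α, γ⟫ = 2) : γ = α := by
  have h1 : ⟪γ, γ⟫ = ‖γ‖ ^ 2 := real_inner_self_eq_norm_sq γ
  have h2 : ⟪α, α⟫ = ‖α‖ ^ 2 := real_inner_self_eq_norm_sq α
  have hnγ : ⟪γ, γ⟫ ≤ 2 := by nlinarith [norm_nonneg γ, norm_nonneg α]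
  have hc : ⟪γ, α⟫ = 2 := by rw [real_inner_comm]; exact h
  have key : ⟪α - γ, α - γ⟫ ≤ 0 := by
    simp only [inner_sub_left, inner_sub_right, hαα, h, hc]
    linarith
  have h0 : ⟪α - γ, α - γ⟫ = (0 : ℝ) := le_antisymm key real_inner_self_nonneg
  have := inner_self_eq_zero.mp h0
  have := sub_eq_zero.mp this
  exact this.symm

/-- the integral bound: inner product of a long root with any shorter vector -/
lemma rs_inner_bound {n : ℕ} {α γ : EuclideanSpace ℝ (Fin n)}
    (hαα : ⟪α, α⟫ = 2) (hγ : ‖γ‖ ≤ ‖α‖) : |⟪α, γ⟫| ≤ 2 := by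
  have h2 : ⟪α, α⟫ = ‖α‖ ^ 2 := real_inner_self_eq_norm_sq α
  have := abs_real_inner_le_norm α γ
  nlinarith [norm_nonneg γ, norm_nonneg α, abs_nonneg (⟪α, γ⟫ : ℝ)]


lemma rs_reflect_add {n : ℕ} (RS : RootSys n) {v w : EuclideanSpace ℝ (Fin n)}
    (hv : v ∈ RS.R) (hw : w ∈ RS.R) (hvv : ⟪v, v⟫ = 2) (hvw : ⟪v, w⟫ = -1) :
    w + v ∈ RS.R := by
  have h := RS.reflect_mem v hv w hw
  have hc : (2 * ⟪v, w⟫ / ⟪v, v⟫ : ℝ) = -1 := by rw [hvw, hvv]; norm_num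
  rw [hc, neg_smul, one_smul, sub_neg_eq_add] at h
  exact h

lemma rs_reflect_sub {n : ℕ} (RS : RootSys n) {v w : EuclideanSpace ℝ (Fin n)}
    (hv : v ∈ RS.R) (hw : w ∈ RS.R) (hvv : ⟪v, v⟫ = 2) (hvw : ⟪v, w⟫ = 1) :
    w - v ∈ RS.R := by
  have h := RS.reflect_mem v hv w hw
  have hc : (2 * ⟪v, w⟫ / ⟪v, v⟫ : ℝ) = 1 := by rw [hvw, hvv]; norm_num
  rw [hc, one_smul] at h
  exact h

/-- connectivity: from irreducibility, any two roots are connected by a chain,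
and any chain can be shortened to length ≤ 2. -/
lemma rs_chain {n : ℕ} (RS : RootSys n) {α β : EuclideanSpace ℝ (Fin n)}
    (hα : α ∈ RS.R) (hβ : β ∈ RS.R) :
    β = α ∨ ⟪α, β⟫ ≠ 0 ∨ ∃ γ ∈ RS.R, ⟪α, γ⟫ ≠ 0 ∧ ⟪γ, β⟫ ≠ 0 := by
  classical
  set r : EuclideanSpace ℝ (Fin n) → EuclideanSpace ℝ (Fin n) → Prop :=
    fun x y => x ∈ RS.R ∧ y ∈ RS.R ∧ ⟪x, y⟫ ≠ 0 with hr
  set T : Set (EuclideanSpace ℝ (Fin n)) :=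
    {x | x ∈ RS.R ∧ Relation.ReflTransGen r α x} with hT
  have hTR : T ⊆ RS.R := fun x hx => hx.1
  have hTsplit : ∀ x ∈ T, ∀ y ∈ RS.R \ T, ⟪x, y⟫ = 0 := by
    intro x hx y hy
    by_contra hne
    exact hy.2 ⟨hy.1, hx.2.tail ⟨hx.1, hy.1, hne⟩⟩
  have hαT : α ∈ T := ⟨hα, Relation.ReflTransGen.refl⟩
  have hTeq : T = RS.R := by
    rcases RS.irreducible T hTR hTsplit with h | h
    · exact absurd (h ▸ hαT) (Set.notMem_empty α)
    · exact h
  have hβT : β ∈ T := hTeq ▸ hβ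
  have key : ∀ x : EuclideanSpace ℝ (Fin n), Relation.ReflTransGen r α x →
      (x = α ∨ ⟪α, x⟫ ≠ 0 ∨ ∃ γ ∈ RS.R, ⟪α, γ⟫ ≠ 0 ∧ ⟪γ, x⟫ ≠ 0) := by
    intro x h
    induction h with
    | refl => exact Or.inl rfl
    | @tail b c hab hbc ih =>
      obtain ⟨hbR, hcR, hbc0⟩ := hbc
      rcases ih with rfl | h0 | ⟨γ, hγR, hαγ, hγb⟩
      · exact Or.inr (Or.inl hbc0)
      · exact Or.inr (Or.inr ⟨b, hbR, h0, hbc0⟩)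
      · by_cases hgc : ⟪γ, c⟫ ≠ 0
        · exact Or.inr (Or.inr ⟨γ, hγR, hαγ, hgc⟩)
        · by_cases hab0 : ⟪α, b⟫ ≠ 0
          · exact Or.inr (Or.inr ⟨b, hbR, hab0, hbc0⟩)
          · push_neg at hgc hab0
            set t : ℝ := 2 * ⟪b, γ⟫ / ⟪b, b⟫ with ht
            have hμR : γ - t • b ∈ RS.R := RS.reflect_mem b hbR γ hγR
            have hb0 : b ≠ 0 := fun h => RS.zero_not_mem (h ▸ hbR)
            have hbb : ⟪b, b⟫ ≠ (0 : ℝ) := inner_self_ne_zero.mpr hb0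
            have hbγ : ⟪b, γ⟫ ≠ (0 : ℝ) := by
              rw [real_inner_comm]; exact hγb
            have htne : t ≠ 0 := div_ne_zero (mul_ne_zero two_ne_zero hbγ) hbb
            refine Or.inr (Or.inr ⟨γ - t • b, hμR, ?_, ?_⟩)
            · rw [inner_sub_right, real_inner_smul_right, hab0]
              simpa using hαγ
            · rw [inner_sub_left, real_inner_smul_left, hgc]
              simp only [zero_sub, neg_ne_zero]
              exact mul_ne_zero htne hbc0
  exact key β hβT.2

/-- If `S` is a set of long roots with `α + β ∉ R` for all `α, β ∈ S` and
`(γ + R) ∩ (S + S) = ∅` for `γ ∈ R \ S`, then all the sets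
`α^⊥ = {γ ∈ S : (α, γ) = 0}` for `α ∈ S` have the same cardinality. -/
theorem stmt_14 {n : ℕ} (RS : RootSys n) (S : Set (EuclideanSpace ℝ (Fin n)))
    (hSR : S ⊆ RS.R)
    (hnorm : ∀ δ ∈ RS.R, (∀ ε ∈ RS.R, ‖ε‖ ≤ ‖δ‖) → ⟪δ, δ⟫ = 2)
    (hlong : ∀ α ∈ S, ∀ ε ∈ RS.R, ‖ε‖ ≤ ‖α‖)
    (h1 : ∀ α ∈ S, ∀ β ∈ S, α + β ∉ RS.R)
    (h2 : ∀ γ ∈ RS.R \ S, ∀ δ ∈ RS.R, ∀ α ∈ S, ∀ β ∈ S, γ + δ ≠ α + β) :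
    ∀ α ∈ S, ∀ β ∈ S,
      {γ ∈ S | ⟪α, γ⟫ = 0}.ncard = {γ ∈ S | ⟪β, γ⟫ = 0}.ncard := by
  classical
  -- all elements of S are long: ⟪α,α⟫ = 2
  have hip2 : ∀ α ∈ S, ⟪α, α⟫ = (2 : ℝ) := fun α hα =>
    hnorm α (hSR hα) (hlong α hα)
  -- integrality of inner products with elements of S
  have hint : ∀ α ∈ S, ∀ γ ∈ RS.R, ∃ k : ℤ, ⟪α, γ⟫ = (k : ℝ) ∧ -2 ≤ k ∧ k ≤ 2 := by
    intro α hα γ hγ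
    obtain ⟨k, hk⟩ := RS.crystal α (hSR hα) γ hγ
    rw [hip2 α hα] at hk
    have hk' : ⟪α, γ⟫ = (k : ℝ) := by
      rw [← hk]; ring
    have hb := rs_inner_bound (hip2 α hα) (hlong α hα γ hγ)
    rw [hk'] at hb
    have h1' : (k : ℝ) ≤ 2 := (abs_le.mp hb).2
    have h2' : (-2 : ℝ) ≤ (k : ℝ) := (abs_le.mp hb).1
    exact ⟨k, hk', by exact_mod_cast h2', by exact_mod_cast h1'⟩
  -- extremes force equality
  have hpm : ∀ α ∈ S, ∀ γ ∈ RS.R,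
      (⟪α, γ⟫ = (2 : ℝ) → γ = α) ∧ (⟪α, γ⟫ = (-2 : ℝ) → γ = -α) := by
    intro α hα γ hγ
    constructor
    · intro h; exact rs_eq_of_inner_two (hip2 α hα) (hlong α hα γ hγ) h
    · intro h
      have hnγ : ‖-γ‖ ≤ ‖α‖ := by rw [norm_neg]; exact hlong α hα γ hγ
      have h' : ⟪α, -γ⟫ = (2 : ℝ) := by rw [inner_neg_right, h]; ring
      have := rs_eq_of_inner_two (hip2 α hα) hnγ h'
      rw [← this]; simp
  -- inner product of two S elements is never -1
  have hnone : ∀ α ∈ S, ∀ β ∈ S, ⟪α, β⟫ ≠ (-1 : ℝ) := by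
    intro α hα β hβ h
    have := rs_reflect_add RS (hSR hα) (hSR hβ) (hip2 α hα) h
    exact h1 α hα β hβ (by rwa [add_comm])
  intro α hα β hβ
  by_cases hmm : ∃ σ ∈ S, -σ ∈ S
  · -- degenerate case: S = R and R = {α, -α}
    obtain ⟨σ, hσ, hσ'⟩ := hmm
    have hRS : RS.R ⊆ S := by
      intro γ hγ
      by_contra hγS
      exact h2 γ ⟨hγ, hγS⟩ (-γ) (RS.neg_mem γ hγ) σ hσ (-σ) hσ' (by abel)
    have hall : ∀ x ∈ RS.R, ∀ y ∈ RS.R, ⟪x, y⟫ = 0 ∨ y = x ∨ y = -x := by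
      intro x hx y hy
      obtain ⟨k, hk, hk2, hk2'⟩ := hint x (hRS hx) y hy
      interval_cases k
      · exact Or.inr (Or.inr ((hpm x (hRS hx) y hy).2 (by exact_mod_cast hk)))
      · exact absurd (by exact_mod_cast hk) (hnone x (hRS hx) y (hRS hy))
      · exact Or.inl (by exact_mod_cast hk)
      · -- ⟪x,y⟫ = 1 : then ⟪x,-y⟫ = -1 contradiction
        exfalso
        apply hnone x (hRS hx) (-y) (hRS (RS.neg_mem y hy))
        rw [inner_neg_right]
        rw [hk]; norm_num
      · exact Or.inr (Or.inl ((hpm x (hRS hx) y hy).1 (by exact_mod_cast hk)))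
    -- irreducibility forces R = {α, -α}
    have hTeq : ∀ γ ∈ RS.R, γ = α ∨ γ = -α := by
      set T : Set (EuclideanSpace ℝ (Fin n)) := {x | x ∈ RS.R ∧ (x = α ∨ x = -α)} with hT
      have hsub : T ⊆ RS.R := fun x hx => hx.1
      have hsplit : ∀ x ∈ T, ∀ y ∈ RS.R \ T, ⟪x, y⟫ = 0 := by
        intro x hx y hy
        rcases hall x hx.1 y hy.1 with h | h | h
        · exact h
        · exfalso; apply hy.2; refine ⟨hy.1, ?_⟩
          rcases hx.2 with e | e
          · exact Or.inl (by rw [h, e])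
          · exact Or.inr (by rw [h, e])
        · exfalso; apply hy.2; refine ⟨hy.1, ?_⟩
          rcases hx.2 with e | e
          · exact Or.inr (by rw [h, e])
          · exact Or.inl (by rw [h, e, neg_neg])
      rcases RS.irreducible T hsub hsplit with h | h
      · exfalso
        have : α ∈ T := ⟨hSR hα, Or.inl rfl⟩
        rw [h] at this; exact this
      · intro γ hγ
        have : γ ∈ T := h ▸ hγ
        exact this.2
    -- both perp sets are empty
    have hemp : ∀ x ∈ S, {γ ∈ S | ⟪x, γ⟫ = 0} = ∅ := by
      intro x hx
      ext γ
      simp only [Set.mem_setOf_eq, Set.mem_empty_iff_false, iff_false, not_and]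
      intro hγ h0
      have hip0 : ⟪α, α⟫ ≠ (0 : ℝ) := by rw [hip2 α hα]; norm_num
      rcases hTeq x (hSR hx) with hx' | hx' <;> rcases hTeq γ (hSR hγ) with hγ' | hγ' <;>
        rw [hx', hγ'] at h0 <;>
        first
          | exact hip0 h0
          | (simp only [inner_neg_left, inner_neg_right, neg_neg, neg_eq_zero] at h0;
             exact hip0 h0)
    rw [hemp α hα, hemp β hβ]
  · -- main case: S ∩ (-S) = ∅
    push_neg at hmm
    -- inner products within S: 0, 1, or equal
    have hvals : ∀ x ∈ S, ∀ y ∈ S, ⟪x, y⟫ = 0 ∨ ⟪x, y⟫ = 1 ∨ y = x := by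
      intro x hx y hy
      obtain ⟨k, hk, hk2, hk2'⟩ := hint x hx y (hSR hy)
      interval_cases k
      · exfalso
        have h' := (hpm x hx y (hSR hy)).2 (by exact_mod_cast hk)
        exact hmm x hx (h' ▸ hy)
      · exact absurd (by exact_mod_cast hk) (hnone x hx y hy)
      · exact Or.inl (by exact_mod_cast hk)
      · exact Or.inr (Or.inl (by exact_mod_cast hk))
      · exact Or.inr (Or.inr ((hpm x hx y (hSR hy)).1 (by exact_mod_cast hk)))
    -- key lemma: reflection bijection when ⟪x,y⟫ = 1
    have keyC : ∀ x ∈ S, ∀ y ∈ S, ⟪x, y⟫ = 1 →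
        {γ ∈ S | ⟪x, γ⟫ = 0}.ncard = {γ ∈ S | ⟪y, γ⟫ = 0}.ncard := by
      -- the reflection map
      have mapsto : ∀ x ∈ S, ∀ y ∈ S, ⟪x, y⟫ = 1 →
          Set.MapsTo (fun z => z - ⟪x - y, z⟫ • (x - y))
            {γ ∈ S | ⟪x, γ⟫ = 0} {γ ∈ S | ⟪y, γ⟫ = 0} := by
        intro x hx y hy hxy γ hγ
        obtain ⟨hγS, hγ0⟩ := hγ
        have hyx : ⟪y, x⟫ = 1 := by rw [real_inner_comm]; exact hxy
        rcases hvals y hy γ hγS with hyγ | hyγ | rfl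
        · -- fixed point
          have : ⟪x - y, γ⟫ = (0 : ℝ) := by
            rw [inner_sub_left, hγ0, hyγ]; ring
          simp only [Set.mem_setOf_eq, this, zero_smul, sub_zero]
          exact ⟨hγS, hyγ⟩
        · -- moved point: γ + x - y
          have hc : ⟪x - y, γ⟫ = (-1 : ℝ) := by
            rw [inner_sub_left, hγ0, hyγ]; ring
          have himg : γ - ⟪x - y, γ⟫ • (x - y) = γ + (x - y) := by
            rw [hc]; module
          -- x - y is a root
          have hvR : x - y ∈ RS.R := rs_reflect_sub RS (hSR hy) (hSR hx) (hip2 y hy) hyx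
          have hvv : ⟪x - y, x - y⟫ = (2 : ℝ) := by
            simp only [inner_sub_left, inner_sub_right, hip2 x hx, hip2 y hy, hxy, hyx]
            ring
          -- γ + (x - y) is a root
          have hgR : γ + (x - y) ∈ RS.R := rs_reflect_add RS hvR (hSR hγS) hvv hc
          -- γ + (x - y) is in S by h2
          have hgS : γ + (x - y) ∈ S := by
            by_contra hns
            apply h2 (γ + (x - y)) ⟨hgR, hns⟩ y (hSR hy) γ hγS x hx
            abel
          simp only [Set.mem_setOf_eq]
          rw [himg]
          refine ⟨hgS, ?_⟩
          rw [inner_add_right, inner_sub_right, hyγ, hyx, hip2 y hy]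
          ring
        · exfalso; rw [hγ0] at hxy; norm_num at hxy
      intro x hx y hy hxy
      have hyx : ⟪y, x⟫ = 1 := by rw [real_inner_comm]; exact hxy
      set φ : EuclideanSpace ℝ (Fin n) → EuclideanSpace ℝ (Fin n) :=
        fun z => z - ⟪x - y, z⟫ • (x - y) with hφ
      have hvv : ⟪x - y, x - y⟫ = (2 : ℝ) := by
        simp only [inner_sub_left, inner_sub_right, hip2 x hx, hip2 y hy, hxy, hyx]
        ring
      have hinv : ∀ z, φ (φ z) = z := by
        intro z
        simp only [hφ]
        have : ⟪x - y, z - ⟪x - y, z⟫ • (x - y)⟫ = -⟪x - y, z⟫ := by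
          rw [inner_sub_right, real_inner_smul_right, hvv]; ring
        rw [this]; module
      have hAB := mapsto x hx y hy hxy
      have hBA' := mapsto y hy x hx hyx
      have hBA : Set.MapsTo φ {γ ∈ S | ⟪y, γ⟫ = 0} {γ ∈ S | ⟪x, γ⟫ = 0} := by
        have hfun : (fun z => z - ⟪y - x, z⟫ • (y - x)) = φ := by
          funext z
          simp only [hφ]
          have h1' : ⟪y - x, z⟫ = -⟪x - y, z⟫ := by
            rw [inner_sub_left, inner_sub_left]; ring
          rw [h1']; module
        rwa [hfun] at hBA'
      have hbij : Set.BijOn φ {γ ∈ S | ⟪x, γ⟫ = 0} {γ ∈ S | ⟪y, γ⟫ = 0} := by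
        refine ⟨hAB, ?_, ?_⟩
        · intro a _ b _ hab
          rw [← hinv a, ← hinv b, hab]
        · intro b hb
          exact ⟨φ b, hBA hb, hinv b⟩
      rw [← hbij.image_eq]
      exact (Set.ncard_image_of_injOn hbij.injOn).symm
    -- now the main case analysis
    rcases hvals α hα β hβ with hab | hab | rfl
    · -- orthogonal case: find a connecting root γ
      rcases rs_chain RS (hSR hα) (hSR hβ) with rfl | hne | ⟨γ, hγR, hαγ, hγβ⟩
      · rfl
      · exact absurd hab hne
      · -- normalize γ: first make ⟪α,γ⟫ = 1
        have hγval : ∀ δ ∈ RS.R, ⟪α, δ⟫ ≠ 0 → ⟪δ, β⟫ ≠ 0 →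
            ∃ γ' ∈ RS.R, ⟪α, γ'⟫ = 1 ∧ (⟪β, γ'⟫ = 1 ∨ ⟪β, γ'⟫ = -1) := by
          intro δ hδR hαδ hδβ
          obtain ⟨k, hk, hk2, hk2'⟩ := hint α hα δ hδR
          obtain ⟨l, hl, hl2, hl2'⟩ := hint β hβ δ hδR
          have hkn2 : k ≠ -2 := by
            rintro rfl
            have := (hpm α hα δ hδR).2 (by exact_mod_cast hk)
            subst this
            rw [inner_neg_left, hab] at hδβ
            norm_num at hδβ
          have hkn2' : k ≠ 2 := by
            rintro rfl
            have := (hpm α hα δ hδR).1 (by exact_mod_cast hk)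
            subst this
            rw [hab] at hδβ
            norm_num at hδβ
          have hk0 : k ≠ 0 := by
            rintro rfl
            rw [hk] at hαδ; norm_num at hαδ
          have hln2 : l ≠ -2 := by
            rintro rfl
            have := (hpm β hβ δ hδR).2 (by exact_mod_cast hl)
            subst this
            rw [inner_neg_right, hab] at hαδ
            norm_num at hαδ
          have hln2' : l ≠ 2 := by
            rintro rfl
            have := (hpm β hβ δ hδR).1 (by exact_mod_cast hl)
            subst this
            rw [hab] at hαδ; norm_num at hαδ
          have hl0 : l ≠ 0 := by
            rintro rfl
            rw [real_inner_comm] at hl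
            rw [hl] at hδβ; norm_num at hδβ
          have hkval : ⟪α, δ⟫ = 1 ∨ ⟪α, δ⟫ = -1 := by
            have : k = 1 ∨ k = -1 := by omega
            rcases this with rfl | rfl
            · left; exact_mod_cast hk
            · right; exact_mod_cast hk
          have hlval : ⟪β, δ⟫ = 1 ∨ ⟪β, δ⟫ = -1 := by
            have : l = 1 ∨ l = -1 := by omega
            rcases this with rfl | rfl
            · left; exact_mod_cast hl
            · right; exact_mod_cast hl
          rcases hkval with h | h
          · exact ⟨δ, hδR, h, hlval⟩
          · refine ⟨-δ, RS.neg_mem δ hδR, ?_, ?_⟩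
            · rw [inner_neg_right, h]; ring
            · rcases hlval with h' | h'
              · right; rw [inner_neg_right, h']
              · left; rw [inner_neg_right, h']; ring
        obtain ⟨γ', hγ'R, hαγ', hβγ'⟩ := hγval γ hγR hαγ hγβ
        -- now make ⟪β,γ''⟫ = 1 as well
        have hfinal : ∃ γ'' ∈ RS.R, ⟪α, γ''⟫ = 1 ∧ ⟪β, γ''⟫ = 1 := by
          rcases hβγ' with h | h
          · exact ⟨γ', hγ'R, hαγ', h⟩
          · refine ⟨γ' + β, ?_, ?_, ?_⟩
            · exact rs_reflect_add RS (hSR hβ) hγ'R (hip2 β hβ) h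
            · rw [inner_add_right, hαγ', hab]; ring
            · rw [inner_add_right, h, hip2 β hβ]; ring
        obtain ⟨γ'', hγ''R, ha1, hb1⟩ := hfinal
        -- show α + β - γ'' ∈ R
        have hs1 : γ'' - α ∈ RS.R := rs_reflect_sub RS (hSR hα) hγ''R (hip2 α hα) ha1
        have hs2 : γ'' - α - β ∈ RS.R := by
          have hβγα : ⟪β, γ'' - α⟫ = (1 : ℝ) := by
            have hba : ⟪β, α⟫ = (0 : ℝ) := by rw [real_inner_comm]; exact hab
            rw [inner_sub_right, hb1, hba]; ring
          exact rs_reflect_sub RS (hSR hβ) hs1 (hip2 β hβ) hβγα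
        have hs3 : α + β - γ'' ∈ RS.R := by
          have := RS.neg_mem _ hs2
          have heq : -(γ'' - α - β) = α + β - γ'' := by abel
          rwa [heq] at this
        -- h2 forces γ'' ∈ S
        have hγ''S : γ'' ∈ S := by
          by_contra hns
          exact h2 γ'' ⟨hγ''R, hns⟩ (α + β - γ'') hs3 α hα β hβ (by abel)
        have e1 := keyC α hα γ'' hγ''S ha1
        have e2 := keyC β hβ γ'' hγ''S hb1
        rw [e1, e2]
    · exact keyC α hα β hβ hab
    · rfl
end

section
/- Let R be an irreducible root system and S ⊆ R. Suppose S = S(λ) for some weight λ with max λ > 0, where max λ = max{(λ, α) : α ∈ R} and S(λ) = {α ∈ R : (λ, α) = max λ}. Then for η in the ℤ₊-span of S, if η = Σ m_α α over α ∈ R with m_α ∈ ℤ₊ and Σ m_α equals the minimal number of roots (with multiplicity) summing to η, then m_α = 0 for all α ∉ S; conversely any expression of η as a sum of elements of S uses the minimal number of roots. -/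
open RealInnerProductSpace

namespace RootSys

variable {n : ℕ} (RS : RootSys n)

/-- `m` encodes a decomposition of `η` as a `ℤ₊`-combination of roots. -/
noncomputable def IsDecomp (η : EuclideanSpace ℝ (Fin n))
    (m : EuclideanSpace ℝ (Fin n) → ℕ) : Prop :=
  (∀ α, m α ≠ 0 → α ∈ RS.R) ∧ η = ∑ α ∈ RS.finite.toFinset, (m α : ℝ) • α

/-- `𝐝(η)`: the minimal number of roots (with multiplicity) summing to `η`. -/
noncomputable def dd (η : EuclideanSpace ℝ (Fin n)) : ℕ :=
  sInf {k | ∃ m, RS.IsDecomp η m ∧ ∑ α ∈ RS.finite.toFinset, m α = k}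

end RootSys

/-- If `S = S(λ)` with `max λ > 0`, then for `η` in the `ℤ₊`-span of `S`, a
`ℤ₊`-root-decomposition of `η` has minimal length `𝐝(η)` iff it is supported
on `S`. -/
theorem stmt_15 {n : ℕ} (RS : RootSys n) (S : Set (EuclideanSpace ℝ (Fin n)))
    (lam : EuclideanSpace ℝ (Fin n)) (M : ℝ)
    (hM : IsGreatest ((fun α => ⟪lam, α⟫) '' RS.R) M) (hMpos : 0 < M)
    (hS : S = {α ∈ RS.R | ⟪lam, α⟫ = M})
    (η : EuclideanSpace ℝ (Fin n))
    (hη : ∃ m, RS.IsDecomp η m ∧ ∀ α ∉ S, m α = 0) :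
    ∀ m, RS.IsDecomp η m →
      ((∑ α ∈ RS.finite.toFinset, m α = RS.dd η) ↔ ∀ α ∉ S, m α = 0) := by

  subst hS
  intro m hm
  classical
  set F := RS.finite.toFinset with hF
  have hmemF : ∀ α, α ∈ F ↔ α ∈ RS.R := fun α => RS.finite.mem_toFinset
  have key : ∀ m' : EuclideanSpace ℝ (Fin n) → ℕ, RS.IsDecomp η m' →
      ⟪lam, η⟫ = ∑ α ∈ F, (m' α : ℝ) * ⟪lam, α⟫ := by
    intro m' hm'
    rw [hm'.2, inner_sum]
    exact Finset.sum_congr rfl fun α _ => real_inner_smul_right _ _ _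
  have hle : ∀ α ∈ RS.R, ⟪lam, α⟫ ≤ M := fun α hα => hM.2 ⟨α, hα, rfl⟩
  obtain ⟨m₀, hm₀, hm₀S⟩ := hη
  have hsupM : ∀ (m' : EuclideanSpace ℝ (Fin n) → ℕ),
      (∀ α ∉ {α ∈ RS.R | ⟪lam, α⟫ = M}, m' α = 0) →
      ∑ α ∈ F, (m' α : ℝ) * ⟪lam, α⟫ = (∑ α ∈ F, (m' α : ℝ)) * M := by
    intro m' hsub
    rw [Finset.sum_mul]
    refine Finset.sum_congr rfl fun α _ => ?_
    rcases eq_or_ne (m' α) 0 with h0 | h0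
    · simp [h0]
    · have hαS : α ∈ {α ∈ RS.R | ⟪lam, α⟫ = M} := by
        by_contra hc; exact h0 (hsub α hc)
      rw [hαS.2]
  set N₀ := ∑ α ∈ F, m₀ α with hN₀
  have hinner : ⟪lam, η⟫ = (N₀ : ℝ) * M := by
    rw [key m₀ hm₀, hsupM m₀ hm₀S]
    norm_num [hN₀]
  have hlow : ∀ m', RS.IsDecomp η m' → N₀ ≤ ∑ α ∈ F, m' α := by
    intro m' hm'
    have h1 : (N₀ : ℝ) * M ≤ ((∑ α ∈ F, m' α : ℕ) : ℝ) * M := by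
      rw [← hinner, key m' hm']
      push_cast
      calc ∑ α ∈ F, (m' α : ℝ) * ⟪lam, α⟫
          ≤ ∑ α ∈ F, (m' α : ℝ) * M :=
            Finset.sum_le_sum fun α hα =>
              mul_le_mul_of_nonneg_left (hle α ((hmemF α).1 hα)) (Nat.cast_nonneg _)
        _ = (∑ α ∈ F, (m' α : ℝ)) * M := (Finset.sum_mul _ _ _).symm
    have h2 := (mul_le_mul_iff_of_pos_right hMpos).1 h1
    exact_mod_cast h2
  have hdd : RS.dd η = N₀ := by
    refine le_antisymm (Nat.sInf_le ⟨m₀, hm₀, rfl⟩)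
      (le_csInf ⟨N₀, m₀, hm₀, rfl⟩ ?_)
    rintro k ⟨m', hm', rfl⟩
    exact hlow m' hm'
  constructor
  · intro hsum α hαS
    rw [hdd] at hsum
    by_contra h0
    have hαR : α ∈ RS.R := hm.1 α h0
    have hαF : α ∈ F := (hmemF α).2 hαR
    have hlt : ⟪lam, α⟫ < M :=
      lt_of_le_of_ne (hle α hαR) (fun h => hαS ⟨hαR, h⟩)
    have hsumR : (∑ β ∈ F, (m β : ℝ)) = (N₀ : ℝ) := by exact_mod_cast hsum
    have hzero : ∑ β ∈ F, (m β : ℝ) * (M - ⟪lam, β⟫) = 0 := by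
      have e : ∑ β ∈ F, (m β : ℝ) * (M - ⟪lam, β⟫)
          = (∑ β ∈ F, (m β : ℝ)) * M - ∑ β ∈ F, (m β : ℝ) * ⟪lam, β⟫ := by
        rw [Finset.sum_mul, ← Finset.sum_sub_distrib]
        exact Finset.sum_congr rfl fun β _ => by ring
      rw [e, hsumR, ← key m hm, hinner]; ring
    have hterm := (Finset.sum_eq_zero_iff_of_nonneg fun β hβ =>
      mul_nonneg (Nat.cast_nonneg _)
        (sub_nonneg.2 (hle β ((hmemF β).1 hβ)))).1 hzero α hαF
    rcases mul_eq_zero.1 hterm with h | h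
    · exact h0 (Nat.cast_eq_zero.1 h)
    · linarith
  · intro hsub
    rw [hdd]
    have h1 : (∑ α ∈ F, (m α : ℝ)) * M = (N₀ : ℝ) * M := by
      rw [← hsupM m hsub, ← key m hm, hinner]
    have h2 := mul_right_cancel₀ (ne_of_gt hMpos) h1
    exact_mod_cast h2
end

section
/- Let R be an irreducible root system and S ⊆ R. If the condition holds that every η in the ℤ₊-span of S achieves its minimal-length root decomposition exactly by expressions supported on S (i.e., for η ∈ ℤ₊S written as η = Σ_{α∈R} m_α α with m_α ∈ ℤ₊, one has Σ m_α = 𝐝(η) iff m_α = 0 for all α ∉ S), then: α + β ∉ R for all α, β ∈ S, and for γ ∈ R \ S, (γ + R) ∩ (S + S) = ∅. -/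
open RealInnerProductSpace

/-- If every `η` in the `ℤ₊`-span of `S` achieves its minimal-length root
decomposition exactly by expressions supported on `S`, then `α + β ∉ R` for all
`α, β ∈ S`, and `(γ + R) ∩ (S + S) = ∅` for `γ ∈ R \ S`. -/
theorem stmt_16 {n : ℕ} (RS : RootSys n) (S : Set (EuclideanSpace ℝ (Fin n)))
    (hSR : S ⊆ RS.R)
    (hmin : ∀ η : EuclideanSpace ℝ (Fin n),
      (∃ m, RS.IsDecomp η m ∧ ∀ α ∉ S, m α = 0) →
      ∀ m, RS.IsDecomp η m →
        ((∑ α ∈ RS.finite.toFinset, m α = RS.dd η) ↔ ∀ α ∉ S, m α = 0)) :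
    (∀ α ∈ S, ∀ β ∈ S, α + β ∉ RS.R) ∧
    (∀ γ ∈ RS.R \ S, ∀ δ ∈ RS.R, ∀ α ∈ S, ∀ β ∈ S, γ + δ ≠ α + β) := by

  classical
  -- pair decompositions
  have hpair : ∀ γ ∈ RS.R, ∀ δ ∈ RS.R,
      ∃ m : EuclideanSpace ℝ (Fin n) → ℕ,
        RS.IsDecomp (γ + δ) m ∧ (∑ α ∈ RS.finite.toFinset, m α = 2) ∧
        (∀ x, m x ≠ 0 → x = γ ∨ x = δ) ∧ m γ ≠ 0 := by
    intro γ hγ δ hδ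
    have hγF : γ ∈ RS.finite.toFinset := RS.finite.mem_toFinset.2 hγ
    have hδF : δ ∈ RS.finite.toFinset := RS.finite.mem_toFinset.2 hδ
    refine ⟨fun x => (if x = γ then 1 else 0) + (if x = δ then 1 else 0), ⟨?_, ?_⟩, ?_, ?_, ?_⟩
    · intro x hx
      by_contra hxR
      have h1 : x ≠ γ := fun h => hxR (h ▸ hγ)
      have h2 : x ≠ δ := fun h => hxR (h ▸ hδ)
      simp [h1, h2] at hx
    · push_cast
      simp only [add_smul, ite_smul, one_smul, zero_smul, Finset.sum_add_distrib,
        Finset.sum_ite_eq', hγF, hδF, if_true]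
    · simp [Finset.sum_add_distrib, Finset.sum_ite_eq', hγF, hδF]
    · intro x hx
      by_contra hc
      push_neg at hc
      simp [hc.1, hc.2] at hx
    · simp
  have hdd_le : ∀ (η : EuclideanSpace ℝ (Fin n)) (m : EuclideanSpace ℝ (Fin n) → ℕ),
      RS.IsDecomp η m → RS.dd η ≤ ∑ α ∈ RS.finite.toFinset, m α :=
    fun η m hm => Nat.sInf_le ⟨m, hm, rfl⟩
  -- no α with α ∈ S and -α ∈ S
  have hzero : ∀ α ∈ S, -α ∉ S := by
    intro α hα hneg
    have hαR := hSR hα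
    obtain ⟨m, hm, hsum, hsupp, -⟩ := hpair α hαR (-α) (RS.neg_mem α hαR)
    rw [add_neg_cancel] at hm
    have hm0 : RS.IsDecomp 0 (fun _ => 0) := ⟨fun x hx => absurd rfl hx, by simp⟩
    have hex : ∃ m, RS.IsDecomp 0 m ∧ ∀ x ∉ S, m x = 0 :=
      ⟨fun _ => 0, hm0, fun _ _ => rfl⟩
    have h2 : ∑ α ∈ RS.finite.toFinset, m α = RS.dd 0 := by
      refine (hmin 0 hex m hm).2 ?_
      intro x hx
      by_contra h
      rcases hsupp x h with rfl | rfl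
      exacts [hx hα, hx hneg]
    have hle : RS.dd 0 ≤ 0 := by simpa using hdd_le 0 (fun _ => 0) hm0
    omega
  constructor
  · -- part 1
    intro α hα β hβ hab
    obtain ⟨m, hm, hsum, hsupp, -⟩ := hpair α (hSR hα) β (hSR hβ)
    have hsS : ∀ x ∉ S, m x = 0 := by
      intro x hx
      by_contra h
      rcases hsupp x h with rfl | rfl
      exacts [hx hα, hx hβ]
    have h2 : ∑ α ∈ RS.finite.toFinset, m α = RS.dd (α + β) :=
      (hmin _ ⟨m, hm, hsS⟩ m hm).2 hsS
    have habF : α + β ∈ RS.finite.toFinset := RS.finite.mem_toFinset.2 hab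
    have hone : RS.dd (α + β) ≤ 1 := by
      refine le_trans (hdd_le _ (fun x => if x = α + β then 1 else 0) ⟨?_, ?_⟩) ?_
      · intro x hx
        by_contra hxR
        have h1 : x ≠ α + β := fun h => hxR (h ▸ hab)
        simp [h1] at hx
      · push_cast
        simp only [ite_smul, one_smul, zero_smul, Finset.sum_ite_eq', habF, if_true]
      · simp [Finset.sum_ite_eq', habF]
    omega
  · -- part 2
    intro γ hγ δ hδ α hα β hβ heq
    by_cases h0 : α + β = (0 : EuclideanSpace ℝ (Fin n))
    · have hβα : β = -α := eq_neg_of_add_eq_zero_right h0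
      exact hzero α hα (hβα ▸ hβ)
    · obtain ⟨mS, hmS, hsumS, hsuppS, -⟩ := hpair α (hSR hα) β (hSR hβ)
      have hsS : ∀ x ∉ S, mS x = 0 := by
        intro x hx
        by_contra h
        rcases hsuppS x h with rfl | rfl
        exacts [hx hα, hx hβ]
      have hdd2 : ∑ α ∈ RS.finite.toFinset, mS α = RS.dd (α + β) :=
        (hmin _ ⟨mS, hmS, hsS⟩ mS hmS).2 hsS
      obtain ⟨m2, hm2, hsum2, -, hmγ⟩ := hpair γ hγ.1 δ hδ
      rw [heq] at hm2
      have hall : ∀ x ∉ S, m2 x = 0 :=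
        (hmin _ ⟨mS, hmS, hsS⟩ m2 hm2).1 (by rw [hsum2, ← hdd2, hsumS])
      exact hmγ (hall γ hγ.2)
end
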